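/- arXiv:1907.07968 — 5 statements merged into one kernel-verified Lean document; each statement's English description precedes it below -/
import Mathlib

section
/- Let H be a complex Hilbert space. For N ∈ ℕ, N ≥ 1, and θ ∈ [0,2π), define S_{N,θ} f = Σ_{k=0}^{N} a_k e^{ikθ} and P_{N,θ} f = f_{1−1/N}(θ) = Σ_{k=0}^{∞} a_k (1−1/N)^k e^{ikθ} for f ∈ D(𝔻, H). Then there is an absolute constant c > 0 such that ‖S_{N,θ} f − P_{N,θ} f‖_H ≤ c ‖f‖_{D(𝔻,H)} for all N ≥ 1, θ, and f; moreover, for each fixed f ∈ D(𝔻, H), sup_{θ∈[0,2π)} ‖S_{N,θ} f − P_{N,θ} f‖_H → 0 as N → ∞. -/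
open MeasureTheory Filter Complex Set

noncomputable section

/-- The partial sum `S_{N,θ} f = ∑_{k=0}^{N} a_k e^{ikθ}`. -/
def partialSum1 {H : Type*} [NormedAddCommGroup H] [NormedSpace ℂ H]
    (a : ℕ → H) (θ : ℝ) (N : ℕ) : H :=
  ∑ k ∈ Finset.range (N + 1), Complex.exp (Complex.I * k * θ) • a k

/-- The Abel mean `P_{N,θ} f = f_{1-1/N}(θ) = ∑_{k=0}^{∞} a_k (1-1/N)^k e^{ikθ}`. -/
def abelMean1 {H : Type*} [NormedAddCommGroup H] [NormedSpace ℂ H]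
    (a : ℕ → H) (θ : ℝ) (N : ℕ) : H :=
  ∑' k : ℕ, ((((1 : ℝ) - 1 / (N : ℝ) : ℝ) : ℂ) ^ k * Complex.exp (Complex.I * k * θ)) • a k

lemma one_sub_pow_le' (r:ℝ) (k:ℕ) (h0 : 0 ≤ r) (h1 : r ≤ 1) : 1 - r^k ≤ k*(1-r) := by
  induction k with
  | zero => simp
  | succ n ih =>
    have h2 : (0:ℝ) ≤ (1-r)*(1-r^n) :=
      mul_nonneg (by linarith) (by nlinarith [pow_le_one₀ h0 h1 (n:=n)])
    rw [pow_succ]; push_cast; nlinarith [ih]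

lemma finset_cs (s : Finset ℕ) (x y : ℕ → ℝ) (hx : ∀ k ∈ s, 0 ≤ x k) (hy : ∀ k ∈ s, 0 ≤ y k) :
    ∑ k ∈ s, x k * y k ≤ Real.sqrt (∑ k ∈ s, x k ^ 2) * Real.sqrt (∑ k ∈ s, y k ^ 2) := by
  have h := Finset.sum_mul_sq_le_sq_mul_sq s x y
  have hnn : 0 ≤ ∑ k ∈ s, x k * y k :=
    Finset.sum_nonneg fun k hk => mul_nonneg (hx k hk) (hy k hk)
  calc ∑ k ∈ s, x k * y k = Real.sqrt ((∑ k ∈ s, x k * y k) ^ 2) := (Real.sqrt_sq hnn).symm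
    _ ≤ Real.sqrt ((∑ k ∈ s, x k ^ 2) * ∑ k ∈ s, y k ^ 2) := Real.sqrt_le_sqrt h
    _ = _ := Real.sqrt_mul (Finset.sum_nonneg fun k _ => sq_nonneg _) _

lemma summable_mul_of_sq {x y : ℕ → ℝ} (hx : ∀ k, 0 ≤ x k) (hy : ∀ k, 0 ≤ y k)
    (hx2 : Summable fun k => x k ^ 2) (hy2 : Summable fun k => y k ^ 2) :
    Summable fun k => x k * y k := by
  refine Summable.of_nonneg_of_le (fun k => mul_nonneg (hx k) (hy k))
    (fun k => ?_) ((hx2.add hy2).div_const 2)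
  nlinarith [sq_nonneg (x k - y k)]

lemma tsum_cs {x y : ℕ → ℝ} (hx : ∀ k, 0 ≤ x k) (hy : ∀ k, 0 ≤ y k)
    (hx2 : Summable fun k => x k ^ 2) (hy2 : Summable fun k => y k ^ 2) :
    ∑' k, x k * y k ≤ Real.sqrt (∑' k, x k ^ 2) * Real.sqrt (∑' k, y k ^ 2) := by
  refine Summable.tsum_le_of_sum_le (summable_mul_of_sq hx hy hx2 hy2) fun s => ?_
  refine (finset_cs s x y (fun k _ => hx k) (fun k _ => hy k)).trans ?_
  exact mul_le_mul (Real.sqrt_le_sqrt (Summable.sum_le_tsum s (fun k _ => sq_nonneg _) hx2))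
    (Real.sqrt_le_sqrt (Summable.sum_le_tsum s (fun k _ => sq_nonneg _) hy2))
    (Real.sqrt_nonneg _) (Real.sqrt_nonneg _)

set_option maxHeartbeats 1000000 in
lemma master {H : Type*} [NormedAddCommGroup H] [NormedSpace ℂ H] [CompleteSpace H]
    (a : ℕ → H) (h : Summable fun k : ℕ => ((k : ℝ) + 1) * ‖a k‖ ^ 2)
    (N M : ℕ) (hN : 1 ≤ N) (hM : M ≤ N) (θ : ℝ) :
    ‖partialSum1 a θ N - abelMean1 a θ N‖ ≤
      (M : ℝ) * (∑ k ∈ Finset.range M, ‖a k‖) / N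
        + 2 * Real.sqrt (∑' k : ℕ, (((k + M : ℕ) : ℝ) + 1) * ‖a (k + M)‖ ^ 2) := by
  have hNR : (1:ℝ) ≤ (N:ℝ) := by exact_mod_cast hN
  have hN0 : (0:ℝ) < N := by linarith
  set w2 : ℕ → ℝ := fun k => ((k : ℝ) + 1) * ‖a k‖ ^ 2 with hw2
  set r : ℝ := 1 - 1/(N:ℝ) with hrdef
  have hr0 : 0 ≤ r := by
    have : 1/(N:ℝ) ≤ 1 := by rw [div_le_one hN0]; exact hNR
    rw [hrdef]; linarith
  have hr1 : r < 1 := by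
    have : 0 < 1/(N:ℝ) := by positivity
    rw [hrdef]; linarith
  have h1r : 1 - r = 1/(N:ℝ) := by rw [hrdef]; ring
  set f : ℕ → H := fun k => (((r:ℂ))^k * Complex.exp (Complex.I * k * θ)) • a k with hf
  have hexp : ∀ k:ℕ, ‖Complex.exp (Complex.I * k * θ)‖ = 1 := by
    intro k; simp [Complex.norm_exp, Complex.mul_re, Complex.mul_im]
  have hnormf : ∀ k, ‖f k‖ = r^k * ‖a k‖ := by
    intro k
    rw [hf]
    simp only [norm_smul, norm_mul, norm_pow, hexp k,
      Complex.norm_real, Real.norm_eq_abs, _root_.abs_of_nonneg hr0, mul_one]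
  -- basic summability
  have hwnn : ∀ k, (0:ℝ) ≤ w2 k := fun k => by rw [hw2]; positivity
  have hsq : ∀ k : ℕ, (Real.sqrt ((k:ℝ)+1) * ‖a k‖)^2 = w2 k := fun k => by
    rw [mul_pow, Real.sq_sqrt (by positivity)]
  have hy2 : Summable (fun k : ℕ => (Real.sqrt ((k:ℝ)+1) * ‖a k‖)^2) :=
    h.congr fun k => (hsq k).symm
  have hr2 : r^2 < 1 := by nlinarith
  have hgeom : Summable (fun k:ℕ => (r^2)^k) := summable_geometric_of_lt_one (by positivity) hr2
  have hX2 : Summable (fun k : ℕ => (r^k / Real.sqrt ((k:ℝ)+1))^2) := by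
    refine Summable.of_nonneg_of_le (fun k => sq_nonneg _) (fun k => ?_) hgeom
    rw [div_pow, Real.sq_sqrt (by positivity), ← pow_mul, mul_comm k 2, pow_mul]
    exact div_le_self (by positivity) (by push_cast; linarith [Nat.cast_nonneg (α:=ℝ) k])
  have hnorm_sum : Summable (fun k => r^k * ‖a k‖) := by
    have := summable_mul_of_sq (x := fun k => r^k / Real.sqrt ((k:ℝ)+1))
      (y := fun k => Real.sqrt ((k:ℝ)+1) * ‖a k‖)
      (fun k => by positivity) (fun k => by positivity) hX2 hy2
    refine this.congr fun k => ?_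
    have hs : Real.sqrt ((k:ℝ)+1) ≠ 0 := by positivity
    field_simp
  have hterm : Summable f := by
    refine Summable.of_norm ?_
    simp only [hnormf]; exact hnorm_sum
  -- decomposition
  have e1 : abelMean1 a θ N = (∑ k ∈ Finset.range (N+1), f k) + ∑' k, f (k+(N+1)) := by
    rw [abelMean1, show (((1:ℝ) - 1/(N:ℝ) : ℝ) : ℂ) = ((r:ℂ)) from by rw [hrdef]]
    exact (Summable.sum_add_tsum_nat_add (N+1) hterm).symm
  have key : ∀ k:ℕ, Complex.exp (Complex.I*k*θ) • a k - f k
      = ((1 - ((r:ℂ))^k) * Complex.exp (Complex.I * k * θ)) • a k := by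
    intro k
    simp only [hf]
    rw [← sub_smul]
    congr 1
    ring
  have e2 : partialSum1 a θ N - abelMean1 a θ N =
      (∑ k ∈ Finset.range (N+1),
        ((1 - ((r:ℂ))^k) * Complex.exp (Complex.I * k * θ)) • a k) - ∑' k, f (k+(N+1)) := by
    rw [e1, partialSum1, sub_add_eq_sub_sub, ← Finset.sum_sub_distrib]
    exact congrArg (fun z => z - ∑' k, f (k+(N+1))) (Finset.sum_congr rfl fun k _ => key k)
  have hnorm1 : ∀ k:ℕ, ‖((1 - ((r:ℂ))^k) * Complex.exp (Complex.I * k * θ)) • a k‖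
      = (1 - r^k) * ‖a k‖ := by
    intro k
    have hc : (1 - ((r:ℂ))^k) = (((1 - r^k : ℝ)) : ℂ) := by push_cast; ring
    rw [norm_smul, norm_mul, hexp k, mul_one, hc, Complex.norm_real, Real.norm_eq_abs,
      _root_.abs_of_nonneg (by nlinarith [pow_le_one₀ hr0 hr1.le (n:=k)])]
  have hnormsum2 : Summable (fun m : ℕ => ‖f m‖) := hnorm_sum.congr fun k => (hnormf k).symm
  have hshift_norm : Summable (fun k => ‖f (k+(N+1))‖) :=
    (summable_nat_add_iff (f := fun m : ℕ => ‖f m‖) (N+1)).2 hnormsum2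
  -- main bound
  have hbound : ‖partialSum1 a θ N - abelMean1 a θ N‖ ≤
      (∑ k ∈ Finset.range (N+1), (1 - r^k) * ‖a k‖) + ∑' k, r^(k+(N+1)) * ‖a (k+(N+1))‖ := by
    rw [e2]
    refine (norm_sub_le _ _).trans (add_le_add ?_ ?_)
    · refine (norm_sum_le _ _).trans ?_
      exact le_of_eq (Finset.sum_congr rfl fun k _ => hnorm1 k)
    · refine (norm_tsum_le_tsum_norm hshift_norm).trans ?_
      exact le_of_eq (tsum_congr fun k => hnormf _)
  
  -- tail sums
  have hshiftM : Summable (fun k : ℕ => w2 (k+M)) := (summable_nat_add_iff (f := w2) M).2 h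
  have hTnn : (0:ℝ) ≤ ∑' k, w2 (k+M) := tsum_nonneg fun k => hwnn _
  have hxk0 : ∀ k : ℕ, 0 ≤ 1 - r^k := fun k => by nlinarith [pow_le_one₀ hr0 hr1.le (n:=k)]
  -- A-part : split
  have hsplitA : ∑ k ∈ Finset.range (N+1), (1-r^k)*‖a k‖ =
      ∑ k ∈ Finset.range M, (1-r^k)*‖a k‖ + ∑ k ∈ Finset.Ico M (N+1), (1-r^k)*‖a k‖ := by
    rw [Finset.range_eq_Ico, Finset.range_eq_Ico]
    exact (Finset.sum_Ico_consecutive (fun k => (1-r^k)*‖a k‖) (Nat.zero_le M)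
      (by omega : M ≤ N+1)).symm
  -- head bound
  have hk1 : ∀ k : ℕ, 1 - r^k ≤ (k:ℝ)/N := by
    intro k
    have := one_sub_pow_le' r k hr0 hr1.le
    rw [h1r, mul_one_div] at this
    exact this
  have hA1 : ∑ k ∈ Finset.range M, (1-r^k)*‖a k‖ ≤ (M:ℝ) * (∑ k ∈ Finset.range M, ‖a k‖)/N := by
    calc ∑ k ∈ Finset.range M, (1-r^k)*‖a k‖
        ≤ ∑ k ∈ Finset.range M, ((M:ℝ)/N)*‖a k‖ := by
          refine Finset.sum_le_sum fun k hk => ?_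
          refine mul_le_mul_of_nonneg_right ((hk1 k).trans ?_) (norm_nonneg _)
          have hkM : (k:ℝ) ≤ M := by exact_mod_cast (Finset.mem_range.1 hk).le
          gcongr
      _ = (M:ℝ) * (∑ k ∈ Finset.range M, ‖a k‖)/N := by rw [← Finset.mul_sum]; ring
    -- A2 : Cauchy-Schwarz on Ico M (N+1)
  have hperterm : ∀ k : ℕ, ((1-r^k)/Real.sqrt ((k:ℝ)+1))^2 ≤ (k:ℝ)/(N:ℝ)^2 := by
    intro k
    rw [div_pow, Real.sq_sqrt (by positivity), div_le_div_iff₀ (by positivity) (by positivity)]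
    have hkN : (1-r^k) * N ≤ (k:ℝ) := by
      rw [← le_div_iff₀ hN0]; exact hk1 k
    nlinarith [hxk0 k, Nat.cast_nonneg (α := ℝ) k,
      mul_le_mul hkN hkN (mul_nonneg (hxk0 k) hN0.le) (Nat.cast_nonneg (α := ℝ) k)]
  have hgauss : ∑ k ∈ Finset.range (N+1), (k:ℝ) = (N:ℝ)*((N:ℝ)+1)/2 := by
    have h2 : ((∑ i ∈ Finset.range (N+1), i : ℕ) : ℝ) * 2 = ((N:ℝ)+1)*(N:ℝ) := by
      exact_mod_cast congrArg (Nat.cast (R := ℝ)) (Finset.sum_range_id_mul_two (N+1))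
    push_cast at h2
    linarith
  have hx2sum : ∑ k ∈ Finset.Ico M (N+1), ((1-r^k)/Real.sqrt ((k:ℝ)+1))^2 ≤ 1 := by
    calc ∑ k ∈ Finset.Ico M (N+1), ((1-r^k)/Real.sqrt ((k:ℝ)+1))^2
        ≤ ∑ k ∈ Finset.Ico M (N+1), (k:ℝ)/(N:ℝ)^2 :=
          Finset.sum_le_sum fun k _ => hperterm k
      _ ≤ ∑ k ∈ Finset.range (N+1), (k:ℝ)/(N:ℝ)^2 := by
          refine Finset.sum_le_sum_of_subset_of_nonneg ?_ fun k _ _ => by positivity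
          rw [Finset.range_eq_Ico]
          exact Finset.Ico_subset_Ico (Nat.zero_le M) le_rfl
      _ = (∑ k ∈ Finset.range (N+1), (k:ℝ))/(N:ℝ)^2 := by rw [Finset.sum_div]
      _ ≤ 1 := by
          rw [hgauss, div_le_one (by positivity)]
          nlinarith [hNR]
  have hy2sum : ∑ k ∈ Finset.Ico M (N+1), (Real.sqrt ((k:ℝ)+1) * ‖a k‖)^2
      ≤ ∑' k, w2 (k+M) := by
    calc ∑ k ∈ Finset.Ico M (N+1), (Real.sqrt ((k:ℝ)+1) * ‖a k‖)^2
        = ∑ k ∈ Finset.Ico M (N+1), w2 k := Finset.sum_congr rfl fun k _ => hsq k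
      _ = ∑ j ∈ Finset.range (N+1-M), w2 (M+j) := Finset.sum_Ico_eq_sum_range w2 M (N+1)
      _ = ∑ j ∈ Finset.range (N+1-M), w2 (j+M) :=
          Finset.sum_congr rfl fun j _ => by rw [Nat.add_comm]
      _ ≤ ∑' k, w2 (k+M) := Summable.sum_le_tsum _ (fun k _ => hwnn _) hshiftM
  have hA2 : ∑ k ∈ Finset.Ico M (N+1), (1-r^k)*‖a k‖ ≤ Real.sqrt (∑' k, w2 (k+M)) := by
    calc ∑ k ∈ Finset.Ico M (N+1), (1-r^k)*‖a k‖
        = ∑ k ∈ Finset.Ico M (N+1),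
            ((1-r^k)/Real.sqrt ((k:ℝ)+1)) * (Real.sqrt ((k:ℝ)+1) * ‖a k‖) := by
          refine Finset.sum_congr rfl fun k _ => ?_
          have hs : Real.sqrt ((k:ℝ)+1) ≠ 0 := by positivity
          field_simp
      _ ≤ Real.sqrt (∑ k ∈ Finset.Ico M (N+1), ((1-r^k)/Real.sqrt ((k:ℝ)+1))^2) *
            Real.sqrt (∑ k ∈ Finset.Ico M (N+1), (Real.sqrt ((k:ℝ)+1) * ‖a k‖)^2) :=
          finset_cs _ _ _ (fun k _ => div_nonneg (hxk0 k) (Real.sqrt_nonneg _))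
            (fun k _ => by positivity)
      _ ≤ Real.sqrt 1 * Real.sqrt (∑' k, w2 (k+M)) :=
          mul_le_mul (Real.sqrt_le_sqrt hx2sum) (Real.sqrt_le_sqrt hy2sum)
            (Real.sqrt_nonneg _) (Real.sqrt_nonneg _)
      _ = Real.sqrt (∑' k, w2 (k+M)) := by rw [Real.sqrt_one, one_mul]
  -- B part
  have hxBle : ∀ k : ℕ, (r^(k+(N+1)) / Real.sqrt (((k+(N+1):ℕ):ℝ)+1))^2
      ≤ (r^2)^k * ((N:ℝ)+1)⁻¹ := by
    intro k
    rw [div_pow, Real.sq_sqrt (by positivity)]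
    have h1 : (r ^ (k+(N+1)))^2 ≤ (r^2)^k := by
      rw [← pow_mul, ← pow_mul]
      exact pow_le_pow_of_le_one hr0 hr1.le (by omega)
    have h2 : ((N:ℝ)+1) ≤ ((k+(N+1):ℕ):ℝ)+1 := by
      push_cast; linarith [Nat.cast_nonneg (α:=ℝ) k]
    rw [← div_eq_mul_inv]
    exact div_le_div₀ (by positivity) h1 (by positivity) h2
  have hxB2 : Summable (fun k : ℕ => (r^(k+(N+1)) / Real.sqrt (((k+(N+1):ℕ):ℝ)+1))^2) :=
    Summable.of_nonneg_of_le (fun k => sq_nonneg _) hxBle (hgeom.mul_right _)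
  have hxB2sum : ∑' k : ℕ, (r^(k+(N+1)) / Real.sqrt (((k+(N+1):ℕ):ℝ)+1))^2 ≤ 1 := by
    have hgm : Summable (fun k : ℕ => (r^2)^k * ((N:ℝ)+1)⁻¹) := hgeom.mul_right _
    have h1 := Summable.tsum_le_tsum hxBle hxB2 hgm
    rw [tsum_mul_right, tsum_geometric_of_lt_one (by positivity) hr2] at h1
    refine h1.trans ?_
    have hr2' : 1/(N:ℝ) ≤ 1 - r^2 := by
      have e : 1 - r^2 = (1-r) + (1-r)*r := by ring
      have h0 : 0 ≤ (1/(N:ℝ))*r := mul_nonneg (by positivity) hr0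
      rw [e, h1r]
      linarith
    rw [← mul_inv, inv_le_one_iff₀]
    right
    have h3 : (1/(N:ℝ)) * ((N:ℝ)+1) ≤ (1 - r^2) * ((N:ℝ)+1) :=
      mul_le_mul_of_nonneg_right hr2' (by positivity)
    have h4 : (1:ℝ) ≤ (1/(N:ℝ)) * ((N:ℝ)+1) := by
      have e4 : (1/(N:ℝ)) * ((N:ℝ)+1) = 1 + 1/N := by field_simp
      have : (0:ℝ) < 1/(N:ℝ) := by positivity
      rw [e4]; linarith
    exact h4.trans h3
  have hyB2 : Summable (fun k : ℕ => (Real.sqrt (((k+(N+1):ℕ):ℝ)+1) * ‖a (k+(N+1))‖)^2) := by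
    have := (summable_nat_add_iff (f := w2) (N+1)).2 h
    exact this.congr fun k => (hsq (k+(N+1))).symm
  have hyB2sum : ∑' k : ℕ, (Real.sqrt (((k+(N+1):ℕ):ℝ)+1) * ‖a (k+(N+1))‖)^2
      ≤ ∑' k, w2 (k+M) := by
    have e : (∑' k : ℕ, (Real.sqrt (((k+(N+1):ℕ):ℝ)+1) * ‖a (k+(N+1))‖)^2)
        = ∑' k : ℕ, (fun j => w2 (j+M)) (k + (N+1-M)) := by
      refine tsum_congr fun k => ?_
      have hd : (k + (N+1-M)) + M = k + (N+1) := by omega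
      simp only [hd]
      exact hsq (k+(N+1))
    rw [e]
    have hkey := Summable.sum_add_tsum_nat_add (f := fun j => w2 (j+M)) (N+1-M) hshiftM
    have hpos : (0:ℝ) ≤ ∑ i ∈ Finset.range (N+1-M), (fun j => w2 (j+M)) i :=
      Finset.sum_nonneg fun i _ => hwnn _
    linarith
  have hBbound : ∑' k, r^(k+(N+1)) * ‖a (k+(N+1))‖ ≤ Real.sqrt (∑' k, w2 (k+M)) := by
    calc ∑' k, r^(k+(N+1)) * ‖a (k+(N+1))‖
        = ∑' k : ℕ, (r^(k+(N+1)) / Real.sqrt (((k+(N+1):ℕ):ℝ)+1)) *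
            (Real.sqrt (((k+(N+1):ℕ):ℝ)+1) * ‖a (k+(N+1))‖) := by
          refine tsum_congr fun k => ?_
          have hs : Real.sqrt (((k+(N+1):ℕ):ℝ)+1) ≠ 0 := by positivity
          field_simp
      _ ≤ Real.sqrt (∑' k : ℕ, (r^(k+(N+1)) / Real.sqrt (((k+(N+1):ℕ):ℝ)+1))^2) *
            Real.sqrt (∑' k : ℕ, (Real.sqrt (((k+(N+1):ℕ):ℝ)+1) * ‖a (k+(N+1))‖)^2) :=
          tsum_cs (fun k => div_nonneg (by positivity) (Real.sqrt_nonneg _))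
            (fun k => by positivity) hxB2 hyB2
      _ ≤ Real.sqrt 1 * Real.sqrt (∑' k, w2 (k+M)) :=
          mul_le_mul (Real.sqrt_le_sqrt hxB2sum) (Real.sqrt_le_sqrt hyB2sum)
            (Real.sqrt_nonneg _) (Real.sqrt_nonneg _)
      _ = Real.sqrt (∑' k, w2 (k+M)) := by rw [Real.sqrt_one, one_mul]
  -- conclusion
  have egoal : (∑' k : ℕ, (((k + M : ℕ) : ℝ) + 1) * ‖a (k + M)‖ ^ 2) = ∑' k, w2 (k+M) :=
    tsum_congr fun k => rfl
  rw [egoal]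
  refine hbound.trans ?_
  rw [hsplitA]
  linarith [hA1, hA2, hBbound]

/-- **Lemma (vector-valued Fejér Tauberian lemma).** There is an absolute constant `c > 0`
with `‖S_{N,θ} f − P_{N,θ} f‖ ≤ c ‖f‖_{𝒟(𝔻,H)}` for all `f ∈ 𝒟(𝔻, H)`, `N ≥ 1`, and `θ`;
moreover, for fixed `f`, `S_{N,θ} f − P_{N,θ} f → 0` as `N → ∞`, uniformly in `θ`. -/
theorem fejer_tauberian (H : Type*) [NormedAddCommGroup H] [InnerProductSpace ℂ H]
    [CompleteSpace H] :
    (∃ c : ℝ, 0 < c ∧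
      ∀ (a : ℕ → H), (Summable fun k : ℕ => ((k : ℝ) + 1) * ‖a k‖ ^ 2) →
        ∀ N : ℕ, 1 ≤ N → ∀ θ ∈ Set.Ico (0 : ℝ) (2 * Real.pi),
          ‖partialSum1 a θ N - abelMean1 a θ N‖ ≤
            c * Real.sqrt (∑' k : ℕ, ((k : ℝ) + 1) * ‖a k‖ ^ 2)) ∧
    ∀ (a : ℕ → H), (Summable fun k : ℕ => ((k : ℝ) + 1) * ‖a k‖ ^ 2) →
      ∀ ε : ℝ, 0 < ε → ∃ N₀ : ℕ, ∀ N : ℕ, N₀ ≤ N → 1 ≤ N →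
        ∀ θ ∈ Set.Ico (0 : ℝ) (2 * Real.pi),
          ‖partialSum1 a θ N - abelMean1 a θ N‖ < ε := by
  constructor
  · refine ⟨2, by norm_num, ?_⟩
    intro a ha N hN θ _
    have hm := master a ha N 0 hN (Nat.zero_le N) θ
    simpa using hm
  · intro a ha ε hε
    have htail := tendsto_sum_nat_add (fun k : ℕ => ((k : ℝ) + 1) * ‖a k‖ ^ 2)
    obtain ⟨M, hM⟩ := (Metric.tendsto_atTop.mp htail ((ε/4)^2) (by positivity))
    have hTM : (∑' k : ℕ, (((k + M : ℕ) : ℝ) + 1) * ‖a (k + M)‖ ^ 2) < (ε/4)^2 := by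
      have h1 := hM M le_rfl
      rw [Real.dist_eq, sub_zero,
        _root_.abs_of_nonneg (tsum_nonneg fun k => by positivity)] at h1
      exact_mod_cast h1
    have hTMnn : (0:ℝ) ≤ ∑' k : ℕ, (((k + M : ℕ) : ℝ) + 1) * ‖a (k + M)‖ ^ 2 :=
      tsum_nonneg fun k => by positivity
    set C : ℝ := ∑ k ∈ Finset.range M, ‖a k‖ with hC
    have hC0 : 0 ≤ C := Finset.sum_nonneg fun k _ => norm_nonneg _
    obtain ⟨n0, hn0⟩ := exists_nat_gt (2 * (M:ℝ) * C / ε)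
    refine ⟨max n0 M, fun N hNge hN1 θ _ => ?_⟩
    have hMN : M ≤ N := le_trans (le_max_right _ _) hNge
    have hNR : (1:ℝ) ≤ (N:ℝ) := by exact_mod_cast hN1
    have hN0 : (0:ℝ) < N := by linarith
    have hm := master a ha N M hN1 hMN θ
    refine lt_of_le_of_lt hm ?_
    have hsqrt : Real.sqrt (∑' k : ℕ, (((k + M : ℕ) : ℝ) + 1) * ‖a (k + M)‖ ^ 2) < ε/4 := by
      rw [show ε/4 = |ε/4| from (abs_of_pos (by positivity)).symm, ← Real.sqrt_sq_eq_abs]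
      exact Real.sqrt_lt_sqrt hTMnn hTM
    have hhead : (M:ℝ) * C / N < ε/2 := by
      have hn0N : (n0:ℝ) ≤ (N:ℝ) := by exact_mod_cast le_trans (le_max_left _ _) hNge
      have h2 : 2 * (M:ℝ) * C / ε < (N:ℝ) := lt_of_lt_of_le hn0 hn0N
      rw [div_lt_iff₀ hε] at h2
      rw [div_lt_iff₀ hN0]
      nlinarith [hε, hN0]
    linarith
end
end

section
/- Let H be a complex Hilbert space, let (a_α)_{α∈ℕ²} ∈ D(𝔻², H), and let θ ∈ [0,2π)². Suppose the rectangular partial sums S_N(θ) = Σ_{α₁=0}^{N₁} Σ_{α₂=0}^{N₂} a_α e^{i(α₁θ₁+α₂θ₂)} satisfy sup_{N∈ℕ²} ‖S_N(θ)‖_H < ∞ and S_N(θ) → L in H as min(N₁,N₂) → ∞. Then sup_{r₁,r₂∈[0,1)} ‖f_{r₁,r₂}(θ)‖_H < ∞ and f_{r₁,r₂}(θ) → L as (r₁,r₂) → (1,1). -/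
open MeasureTheory Filter Complex Set

noncomputable section

/-- The rectangular partial sum `S_N(θ) = ∑_{α₁=0}^{N₁} ∑_{α₂=0}^{N₂} a_α e^{i(α₁θ₁+α₂θ₂)}`. -/
def rectSum2 {H : Type*} [NormedAddCommGroup H] [NormedSpace ℂ H]
    (a : ℕ × ℕ → H) (θ : ℝ × ℝ) (N : ℕ × ℕ) : H :=
  ∑ α ∈ Finset.range (N.1 + 1) ×ˢ Finset.range (N.2 + 1),
    Complex.exp (Complex.I * ((α.1 : ℂ) * (θ.1 : ℂ) + (α.2 : ℂ) * (θ.2 : ℂ))) • a α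

/-- The Abel mean `f_{r₁,r₂}(θ) = ∑_α a_α r₁^{α₁} r₂^{α₂} e^{i(α₁θ₁+α₂θ₂)}`. -/
def abelMean2 {H : Type*} [NormedAddCommGroup H] [NormedSpace ℂ H]
    (a : ℕ × ℕ → H) (r θ : ℝ × ℝ) : H :=
  ∑' α : ℕ × ℕ, (((r.1 : ℂ) ^ α.1 * (r.2 : ℂ) ^ α.2) *
    Complex.exp (Complex.I * ((α.1 : ℂ) * (θ.1 : ℂ) + (α.2 : ℂ) * (θ.2 : ℂ)))) • a α

section geoAux

lemma geo_summable {r : ℝ} (h0 : 0 ≤ r) (h1 : r < 1) :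
    Summable (fun n : ℕ => (1 - r) * r ^ n) :=
  (summable_geometric_of_lt_one h0 h1).mul_left _

lemma geo_tsum {r : ℝ} (h0 : 0 ≤ r) (h1 : r < 1) :
    ∑' n : ℕ, (1 - r) * r ^ n = 1 := by
  rw [tsum_mul_left, tsum_geometric_of_lt_one h0 h1]
  field_simp
  exact div_self (by linarith)

lemma geo_shift_summable {r : ℝ} (h0 : 0 ≤ r) (h1 : r < 1) (m : ℕ) :
    Summable (fun n : ℕ => (1 - r) * r ^ (m + n)) := by
  refine ((geo_summable h0 h1).mul_left (r ^ m)).congr fun n => ?_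
  rw [pow_add]; ring

lemma geo_shift_tsum {r : ℝ} (h0 : 0 ≤ r) (h1 : r < 1) (m : ℕ) :
    ∑' n : ℕ, (1 - r) * r ^ (m + n) = r ^ m := by
  have h : ∀ n : ℕ, (1 - r) * r ^ (m + n) = r ^ m * ((1 - r) * r ^ n) := by
    intro n; rw [pow_add]; ring
  rw [tsum_congr h, tsum_mul_left, geo_tsum h0 h1, mul_one]

lemma tsum_prod_mul {f g : ℕ → ℝ} (hf0 : ∀ n, 0 ≤ f n) (hg0 : ∀ n, 0 ≤ g n)
    (hf : Summable f) (hg : Summable g) :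
    ∑' N : ℕ × ℕ, f N.1 * g N.2 = (∑' n, f n) * (∑' n, g n) := by
  rw [Summable.tsum_prod' (hf.mul_of_nonneg hg hf0 hg0) fun n => hg.mul_left (f n)]
  simp_rw [tsum_mul_left, tsum_mul_right]

end geoAux

section rep

variable {H : Type*} [NormedAddCommGroup H] [NormedSpace ℂ H] [CompleteSpace H]

lemma abel_rep (a : ℕ × ℕ → H) (C : ℝ) (hC : ∀ α, ‖a α‖ ≤ C) (θ r : ℝ × ℝ)
    (h10 : 0 ≤ r.1) (h11 : r.1 < 1) (h20 : 0 ≤ r.2) (h21 : r.2 < 1) :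
    HasSum (fun N : ℕ × ℕ =>
        (((((1 - r.1) * r.1 ^ N.1) * ((1 - r.2) * r.2 ^ N.2) : ℝ)) : ℂ) • rectSum2 a θ N)
      (abelMean2 a r θ) := by
  have hC0 : 0 ≤ C := le_trans (norm_nonneg _) (hC 0)
  set e : ℕ × ℕ → ℂ := fun α =>
    Complex.exp (Complex.I * ((α.1 : ℂ) * (θ.1 : ℂ) + (α.2 : ℂ) * (θ.2 : ℂ))) with he
  have hee : ∀ α, ‖e α‖ = 1 := by
    intro α
    simp [he, Complex.norm_exp]
  set b : ℕ × ℕ → H := fun α => e α • a α with hb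
  have hbC : ∀ α, ‖b α‖ ≤ C := by
    intro α; rw [hb]; simp only [norm_smul, hee, one_mul]; exact hC α
  set w : ℕ × ℕ → ℝ := fun N => ((1 - r.1) * r.1 ^ N.1) * ((1 - r.2) * r.2 ^ N.2) with hw
  have hw0 : ∀ N, 0 ≤ w N := by
    intro N; rw [hw]
    have hx : 0 ≤ 1 - r.1 := by linarith
    have hy : 0 ≤ 1 - r.2 := by linarith
    positivity
  set W : ℕ × ℕ → ℂ := fun N => ((w N : ℝ) : ℂ) with hW
  have hWnorm : ∀ N, ‖W N‖ = w N := by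
    intro N; rw [hW]; simp only [Complex.norm_real, Real.norm_eq_abs]
    exact abs_of_nonneg (hw0 N)
  set T : (ℕ × ℕ) × (ℕ × ℕ) → H := fun p =>
    if p.2.1 ≤ p.1.1 ∧ p.2.2 ≤ p.1.2 then W p.1 • b p.2 else 0 with hT
  set φ : (ℕ × ℕ) × (ℕ × ℕ) → (ℕ × ℕ) × (ℕ × ℕ) := fun q =>
    ((q.1.1 + q.2.1, q.1.2 + q.2.2), q.1) with hφ
  have hφinj : Function.Injective φ := by
    rintro ⟨⟨a1, a2⟩, ⟨k1, k2⟩⟩ ⟨⟨a1', a2'⟩, ⟨k1', k2'⟩⟩ h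
    simp only [hφ, Prod.mk.injEq] at h
    obtain ⟨⟨h1, h2⟩, h3, h4⟩ := h
    simp only [Prod.mk.injEq]
    omega
  have hrange : ∀ p ∉ Set.range φ, T p = 0 := by
    intro p hp
    rw [hT]
    refine if_neg fun hcond => hp ?_
    refine ⟨(p.2, (p.1.1 - p.2.1, p.1.2 - p.2.2)), ?_⟩
    obtain ⟨h1, h2⟩ := hcond
    simp only [hφ, Prod.ext_iff]
    refine ⟨⟨?_, ?_⟩, trivial⟩ <;> omega
  have hTφ : ∀ q : (ℕ × ℕ) × (ℕ × ℕ),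
      T (φ q) = W (q.1.1 + q.2.1, q.1.2 + q.2.2) • b q.1 := by
    intro q
    rw [hT, hφ]
    exact if_pos ⟨Nat.le_add_right _ _, Nat.le_add_right _ _⟩
  have hr1' : 0 ≤ 1 - r.1 := by linarith
  have hr2' : 0 ≤ 1 - r.2 := by linarith
  -- summability of T ∘ φ
  have hgsum : Summable (fun q : (ℕ × ℕ) × (ℕ × ℕ) =>
      (C * (r.1 ^ q.1.1 * r.2 ^ q.1.2)) * w q.2) := by
    have h1 : Summable (fun α : ℕ × ℕ => C * (r.1 ^ α.1 * r.2 ^ α.2)) :=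
      (Summable.mul_of_nonneg (f := fun n : ℕ => r.1 ^ n) (g := fun n : ℕ => r.2 ^ n)
        (summable_geometric_of_lt_one h10 h11) (summable_geometric_of_lt_one h20 h21)
        (fun n => pow_nonneg h10 n) (fun n => pow_nonneg h20 n)).mul_left C
    have h2 : Summable w :=
      Summable.mul_of_nonneg (f := fun n : ℕ => (1 - r.1) * r.1 ^ n)
        (g := fun n : ℕ => (1 - r.2) * r.2 ^ n)
        (geo_summable h10 h11) (geo_summable h20 h21)
        (fun n => by positivity) (fun n => by positivity)
    exact Summable.mul_of_nonneg (f := fun α : ℕ × ℕ => C * (r.1 ^ α.1 * r.2 ^ α.2)) (g := w)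
      h1 h2 (fun α => by positivity) hw0
  have hTφsum : Summable (fun q => T (φ q)) := by
    apply Summable.of_norm
    refine Summable.of_nonneg_of_le (fun q => norm_nonneg _) ?_ hgsum
    intro q
    rw [hTφ q, norm_smul, hWnorm]
    have hsplit : w (q.1.1 + q.2.1, q.1.2 + q.2.2) = (r.1 ^ q.1.1 * r.2 ^ q.1.2) * w q.2 := by
      simp only [hw]; rw [pow_add, pow_add]; ring
    rw [hsplit]
    calc (r.1 ^ q.1.1 * r.2 ^ q.1.2) * w q.2 * ‖b q.1‖
        ≤ (r.1 ^ q.1.1 * r.2 ^ q.1.2) * w q.2 * C := by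
          refine mul_le_mul_of_nonneg_left (hbC _) ?_
          exact mul_nonneg (by positivity) (hw0 q.2)
      _ = (C * (r.1 ^ q.1.1 * r.2 ^ q.1.2)) * w q.2 := by ring
  have hTsum : Summable T := (hφinj.summable_iff hrange).mp hTφsum
  have hsupp : Function.support T ⊆ Set.range φ := Function.support_subset_iff'.2 hrange
  have hkey : ∑' p, T p = abelMean2 a r θ := by
    rw [← hφinj.tsum_eq hsupp]
    rw [Summable.tsum_prod' hTφsum (fun α => hTφsum.prod_factor α)]
    rw [abelMean2]
    apply tsum_congr; intro α
    have h1 : ∀ k : ℕ × ℕ, T (φ (α, k)) = W (α.1 + k.1, α.2 + k.2) • b α := fun k => hTφ (α, k)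
    rw [tsum_congr h1]
    have hws : Summable (fun k : ℕ × ℕ => w (α.1 + k.1, α.2 + k.2)) :=
      Summable.mul_of_nonneg (f := fun n : ℕ => (1 - r.1) * r.1 ^ (α.1 + n))
        (g := fun n : ℕ => (1 - r.2) * r.2 ^ (α.2 + n))
        (geo_shift_summable h10 h11 α.1) (geo_shift_summable h20 h21 α.2)
        (fun n => by positivity) (fun n => by positivity)
    have hWs : Summable (fun k : ℕ × ℕ => W (α.1 + k.1, α.2 + k.2)) :=
      Complex.summable_ofReal.mpr hws
    rw [Summable.tsum_smul_const hWs]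
    have hval : (∑' k : ℕ × ℕ, W (α.1 + k.1, α.2 + k.2)) = (((r.1 ^ α.1 * r.2 ^ α.2 : ℝ)) : ℂ) := by
      rw [hW]
      rw [← Complex.ofReal_tsum]
      norm_cast
      rw [tsum_prod_mul (fun n => by positivity) (fun n => by positivity)
        (geo_shift_summable h10 h11 α.1) (geo_shift_summable h20 h21 α.2),
        geo_shift_tsum h10 h11, geo_shift_tsum h20 h21]
    rw [hval, hb, smul_smul]
    congr 1
    push_cast
    ring
  have hinner : ∀ N : ℕ × ℕ, HasSum (fun α => T (N, α)) (W N • rectSum2 a θ N) := by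
    intro N
    have hzero : ∀ α ∉ Finset.range (N.1 + 1) ×ˢ Finset.range (N.2 + 1), T (N, α) = 0 := by
      intro α hα
      rw [hT]
      apply if_neg
      simp only [Finset.mem_product, Finset.mem_range, Nat.lt_succ_iff] at hα
      intro h; exact hα ⟨h.1, h.2⟩
    have hsum_eq : ∑ α ∈ Finset.range (N.1 + 1) ×ˢ Finset.range (N.2 + 1), T (N, α)
        = W N • rectSum2 a θ N := by
      rw [rectSum2, Finset.smul_sum]
      apply Finset.sum_congr rfl
      intro α hα
      simp only [Finset.mem_product, Finset.mem_range, Nat.lt_succ_iff] at hα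
      rw [hT]
      exact if_pos ⟨hα.1, hα.2⟩
    rw [← hsum_eq]
    exact hasSum_sum_of_ne_finset_zero hzero
  have habel : HasSum T (abelMean2 a r θ) := by
    have h := hTsum.hasSum; rwa [hkey] at h
  exact habel.prod_fiberwise hinner


lemma abel_est (a : ℕ × ℕ → H) (C : ℝ) (hC : ∀ α, ‖a α‖ ≤ C) (θ r : ℝ × ℝ)
    (h10 : 0 ≤ r.1) (h11 : r.1 < 1) (h20 : 0 ≤ r.2) (h21 : r.2 < 1)
    (x : H) (B ε' : ℝ) (K : ℕ × ℕ)
    (hB : ∀ N, ‖rectSum2 a θ N - x‖ ≤ B)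
    (hε : ∀ N : ℕ × ℕ, K.1 ≤ N.1 → K.2 ≤ N.2 → ‖rectSum2 a θ N - x‖ ≤ ε') :
    ‖abelMean2 a r θ - x‖ ≤ ε' + B * (K.1 * (1 - r.1) + K.2 * (1 - r.2)) := by
  have hr1' : 0 ≤ 1 - r.1 := by linarith
  have hr2' : 0 ≤ 1 - r.2 := by linarith
  have hε0 : 0 ≤ ε' := le_trans (norm_nonneg _) (hε K le_rfl le_rfl)
  have hB0 : 0 ≤ B := le_trans (norm_nonneg _) (hB K)
  set w : ℕ × ℕ → ℝ := fun N => ((1 - r.1) * r.1 ^ N.1) * ((1 - r.2) * r.2 ^ N.2) with hw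
  have hw0 : ∀ N, 0 ≤ w N := fun N => by rw [hw]; positivity
  have hwsum : Summable w :=
    Summable.mul_of_nonneg (f := fun n : ℕ => (1 - r.1) * r.1 ^ n)
      (g := fun n : ℕ => (1 - r.2) * r.2 ^ n)
      (geo_summable h10 h11) (geo_summable h20 h21)
      (fun n => by positivity) (fun n => by positivity)
  have hwt : (∑' N : ℕ × ℕ, w N) = 1 := by
    rw [hw]
    rw [tsum_prod_mul (fun n => by positivity) (fun n => by positivity)
      (geo_summable h10 h11) (geo_summable h20 h21), geo_tsum h10 h11, geo_tsum h20 h21,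
      mul_one]
  have hrep := abel_rep a C hC θ r h10 h11 h20 h21
  have hW1 : HasSum (fun N : ℕ × ℕ => ((w N : ℝ) : ℂ)) 1 := by
    have h := hwsum.hasSum
    rw [hwt] at h
    have h2 := Complex.hasSum_ofReal.mpr h
    simpa using h2
  have hdiff : HasSum (fun N : ℕ × ℕ => ((w N : ℝ) : ℂ) • (rectSum2 a θ N - x))
      (abelMean2 a r θ - x) := by
    have h := hrep.sub (hW1.smul_const x)
    rw [one_smul] at h
    have h2 : (fun N : ℕ × ℕ => ((w N : ℝ) : ℂ) • (rectSum2 a θ N - x))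
        = fun N : ℕ × ℕ => ((w N : ℝ) : ℂ) • rectSum2 a θ N - ((w N : ℝ) : ℂ) • x := by
      funext N; rw [smul_sub]
    rw [h2]
    exact h
  -- indicator sums
  have hind1sum : Summable (fun N : ℕ × ℕ => if N.1 < K.1 then w N else 0) := by
    refine Summable.of_nonneg_of_le (fun N => ?_) (fun N => ?_) hwsum
    · by_cases h : N.1 < K.1 <;> simp [h, hw0 N]
    · by_cases h : N.1 < K.1 <;> simp [h, hw0 N]
  have hind2sum : Summable (fun N : ℕ × ℕ => if N.2 < K.2 then w N else 0) := by
    refine Summable.of_nonneg_of_le (fun N => ?_) (fun N => ?_) hwsum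
    · by_cases h : N.2 < K.2 <;> simp [h, hw0 N]
    · by_cases h : N.2 < K.2 <;> simp [h, hw0 N]
  have hf1sum : Summable (fun n : ℕ => if n < K.1 then (1 - r.1) * r.1 ^ n else 0) := by
    refine Summable.of_nonneg_of_le (fun n => ?_) (fun n => ?_) (geo_summable h10 h11)
    · by_cases h : n < K.1 <;> simp [h] <;> positivity
    · by_cases h : n < K.1 <;> simp [h] <;> positivity
  have hf2sum : Summable (fun n : ℕ => if n < K.2 then (1 - r.2) * r.2 ^ n else 0) := by
    refine Summable.of_nonneg_of_le (fun n => ?_) (fun n => ?_) (geo_summable h20 h21)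
    · by_cases h : n < K.2 <;> simp [h] <;> positivity
    · by_cases h : n < K.2 <;> simp [h] <;> positivity
  have ht1 : (∑' N : ℕ × ℕ, if N.1 < K.1 then w N else 0) ≤ (K.1 : ℝ) * (1 - r.1) := by
    have heq : ∀ N : ℕ × ℕ, (if N.1 < K.1 then w N else 0)
        = (if N.1 < K.1 then (1 - r.1) * r.1 ^ N.1 else 0) * ((1 - r.2) * r.2 ^ N.2) := by
      intro N; by_cases h : N.1 < K.1 <;> simp [h, hw]
    rw [tsum_congr heq, tsum_prod_mul (f := fun n : ℕ => if n < K.1 then (1 - r.1) * r.1 ^ n else 0)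
      (g := fun n : ℕ => (1 - r.2) * r.2 ^ n)
      (fun n => by by_cases h : n < K.1 <;> simp [h] <;> positivity)
      (fun n => by positivity) hf1sum (geo_summable h20 h21), geo_tsum h20 h21, mul_one]
    rw [tsum_eq_sum (s := Finset.range K.1) (fun n hn => if_neg (by simpa using hn))]
    calc ∑ n ∈ Finset.range K.1, (if n < K.1 then (1 - r.1) * r.1 ^ n else 0)
        ≤ ∑ _n ∈ Finset.range K.1, (1 - r.1) := by
          refine Finset.sum_le_sum fun i hi => ?_
          rw [if_pos (Finset.mem_range.mp hi)]
          nlinarith [pow_le_one₀ h10 h11.le (n := i), pow_nonneg h10 i]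
      _ = (K.1 : ℝ) * (1 - r.1) := by simp [Finset.sum_const, nsmul_eq_mul]; ring
  have ht2 : (∑' N : ℕ × ℕ, if N.2 < K.2 then w N else 0) ≤ (K.2 : ℝ) * (1 - r.2) := by
    have heq : ∀ N : ℕ × ℕ, (if N.2 < K.2 then w N else 0)
        = ((1 - r.1) * r.1 ^ N.1) * (if N.2 < K.2 then (1 - r.2) * r.2 ^ N.2 else 0) := by
      intro N; by_cases h : N.2 < K.2 <;> simp [h, hw]
    rw [tsum_congr heq, tsum_prod_mul (f := fun n : ℕ => (1 - r.1) * r.1 ^ n)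
      (g := fun n : ℕ => if n < K.2 then (1 - r.2) * r.2 ^ n else 0)
      (fun n => by positivity)
      (fun n => by by_cases h : n < K.2 <;> simp [h] <;> positivity)
      (geo_summable h10 h11) hf2sum, geo_tsum h10 h11, one_mul]
    rw [tsum_eq_sum (s := Finset.range K.2) (fun n hn => if_neg (by simpa using hn))]
    calc ∑ n ∈ Finset.range K.2, (if n < K.2 then (1 - r.2) * r.2 ^ n else 0)
        ≤ ∑ _n ∈ Finset.range K.2, (1 - r.2) := by
          refine Finset.sum_le_sum fun i hi => ?_
          rw [if_pos (Finset.mem_range.mp hi)]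
          nlinarith [pow_le_one₀ h20 h21.le (n := i), pow_nonneg h20 i]
      _ = (K.2 : ℝ) * (1 - r.2) := by simp [Finset.sum_const, nsmul_eq_mul]; ring
  -- pointwise bound
  set u : ℕ × ℕ → ℝ := fun N => ε' * w N
      + B * ((if N.1 < K.1 then w N else 0) + (if N.2 < K.2 then w N else 0)) with hu
  have husum : Summable u :=
    (hwsum.mul_left ε').add ((hind1sum.add hind2sum).mul_left B)
  have hpt : ∀ N : ℕ × ℕ, ‖((w N : ℝ) : ℂ) • (rectSum2 a θ N - x)‖ ≤ u N := by
    intro N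
    rw [norm_smul, Complex.norm_real, Real.norm_eq_abs, _root_.abs_of_nonneg (hw0 N)]
    simp only [hu]
    by_cases hN : K.1 ≤ N.1 ∧ K.2 ≤ N.2
    · have h1 : w N * ‖rectSum2 a θ N - x‖ ≤ w N * ε' :=
        mul_le_mul_of_nonneg_left (hε N hN.1 hN.2) (hw0 N)
      rw [if_neg (not_lt.mpr hN.1), if_neg (not_lt.mpr hN.2)]
      simp only [add_zero, mul_zero]
      nlinarith
    · have h1 : w N * ‖rectSum2 a θ N - x‖ ≤ w N * B :=
        mul_le_mul_of_nonneg_left (hB N) (hw0 N)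
      have hwn := hw0 N
      have h3 : 0 ≤ ε' * w N := mul_nonneg hε0 hwn
      rcases not_and_or.mp hN with h | h <;> push_neg at h
      · rw [if_pos h]
        by_cases h2 : N.2 < K.2 <;>
          simp only [h2, if_true, if_false, reduceIte] <;> nlinarith
      · rw [if_pos h]
        by_cases h2 : N.1 < K.1 <;>
          simp only [h2, if_true, if_false, reduceIte] <;> nlinarith
  have hnormsum : Summable (fun N : ℕ × ℕ => ‖((w N : ℝ) : ℂ) • (rectSum2 a θ N - x)‖) :=
    Summable.of_nonneg_of_le (fun N => norm_nonneg _) hpt husum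
  calc ‖abelMean2 a r θ - x‖ = ‖∑' N : ℕ × ℕ, ((w N : ℝ) : ℂ) • (rectSum2 a θ N - x)‖ := by
        rw [hdiff.tsum_eq]
    _ ≤ ∑' N : ℕ × ℕ, ‖((w N : ℝ) : ℂ) • (rectSum2 a θ N - x)‖ :=
        norm_tsum_le_tsum_norm hnormsum
    _ ≤ ∑' N : ℕ × ℕ, u N := Summable.tsum_le_tsum hpt hnormsum husum
    _ = ε' * (∑' N : ℕ × ℕ, w N)
        + B * ((∑' N : ℕ × ℕ, if N.1 < K.1 then w N else 0)
          + (∑' N : ℕ × ℕ, if N.2 < K.2 then w N else 0)) := by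
        rw [hu, Summable.tsum_add (hwsum.mul_left ε') ((hind1sum.add hind2sum).mul_left B),
          tsum_mul_left, tsum_mul_left, Summable.tsum_add hind1sum hind2sum]
    _ ≤ ε' + B * ((K.1 : ℝ) * (1 - r.1) + (K.2 : ℝ) * (1 - r.2)) := by
        rw [hwt, mul_one]
        exact add_le_add_right (mul_le_mul_of_nonneg_left (add_le_add ht1 ht2) hB0) ε'

end rep

/-- **Lemma (bi-parameter Abel summation).** If `f ∈ 𝒟(𝔻², H)` and the rectangular
partial sums at `θ` are uniformly bounded and converge to `L` as `min(N₁,N₂) → ∞`, then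
the Abel means `f_{r₁,r₂}(θ)` are uniformly bounded and converge to `L` as `(r₁,r₂) → (1,1)`. -/
theorem pringsheim_implies_abel (H : Type*) [NormedAddCommGroup H]
    [InnerProductSpace ℂ H] [CompleteSpace H]
    (a : ℕ × ℕ → H)
    (hf : Summable fun α : ℕ × ℕ => ((α.1 : ℝ) + 1) * ((α.2 : ℝ) + 1) * ‖a α‖ ^ 2)
    (θ : ℝ × ℝ) (hθ₁ : θ.1 ∈ Set.Ico 0 (2 * Real.pi)) (hθ₂ : θ.2 ∈ Set.Ico 0 (2 * Real.pi))
    (L : H)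
    (hbdd : ∃ M : ℝ, ∀ N : ℕ × ℕ, ‖rectSum2 a θ N‖ ≤ M)
    (hconv : Filter.Tendsto (rectSum2 a θ) Filter.atTop (nhds L)) :
    (∃ M : ℝ, ∀ r ∈ Set.Ico (0 : ℝ) 1 ×ˢ Set.Ico (0 : ℝ) 1, ‖abelMean2 a r θ‖ ≤ M) ∧
    Filter.Tendsto (fun r : ℝ × ℝ => abelMean2 a r θ)
      (nhdsWithin (1, 1) (Set.Ico (0 : ℝ) 1 ×ˢ Set.Ico (0 : ℝ) 1)) (nhds L) := by
  obtain ⟨M, hM⟩ := hbdd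
  have hM0 : 0 ≤ M := le_trans (norm_nonneg _) (hM (0, 0))
  set D := ∑' α : ℕ × ℕ, ((α.1 : ℝ) + 1) * ((α.2 : ℝ) + 1) * ‖a α‖ ^ 2 with hD
  have hC : ∀ α, ‖a α‖ ≤ Real.sqrt D := by
    intro α
    have h1 : ‖a α‖ ^ 2 ≤ ((α.1 : ℝ) + 1) * ((α.2 : ℝ) + 1) * ‖a α‖ ^ 2 := by
      have c1 : (0:ℝ) ≤ (α.1 : ℝ) := Nat.cast_nonneg _
      have c2 : (0:ℝ) ≤ (α.2 : ℝ) := Nat.cast_nonneg _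
      nlinarith [sq_nonneg ‖a α‖, mul_nonneg c1 c2,
        mul_nonneg (mul_nonneg c1 c2) (sq_nonneg ‖a α‖),
        mul_nonneg c1 (sq_nonneg ‖a α‖), mul_nonneg c2 (sq_nonneg ‖a α‖)]
    have h2 : ((α.1 : ℝ) + 1) * ((α.2 : ℝ) + 1) * ‖a α‖ ^ 2 ≤ D :=
      Summable.le_tsum hf α fun β _ => by positivity
    calc ‖a α‖ = Real.sqrt (‖a α‖ ^ 2) := by
          rw [Real.sqrt_sq (norm_nonneg _)]
      _ ≤ Real.sqrt D := Real.sqrt_le_sqrt (by linarith)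
  constructor
  · refine ⟨M, ?_⟩
    rintro r hr
    obtain ⟨⟨h10, h11⟩, ⟨h20, h21⟩⟩ := hr
    have key := abel_est a (Real.sqrt D) hC θ r h10 h11 h20 h21 0 M M (0, 0)
      (fun N => by simpa using hM N) (fun N _ _ => by simpa using hM N)
    simpa using key
  · rw [Metric.tendsto_nhdsWithin_nhds]
    intro ε hεpos
    obtain ⟨K, hK⟩ := (Metric.tendsto_atTop.mp hconv) (ε / 4) (by linarith)
    set B := M + ‖L‖ with hBdef
    have hB0 : 0 ≤ B := add_nonneg hM0 (norm_nonneg L)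
    have hBbound : ∀ N, ‖rectSum2 a θ N - L‖ ≤ B := fun N =>
      (norm_sub_le _ _).trans (add_le_add_left (hM N) _)
    set P := B * ((K.1 : ℝ) + (K.2 : ℝ)) + 1 with hP
    have hP0 : 0 < P := by positivity
    refine ⟨min (ε / (4 * P)) 1, by positivity, ?_⟩
    rintro r hr hdist
    obtain ⟨⟨h10, h11⟩, ⟨h20, h21⟩⟩ := hr
    rw [Prod.dist_eq] at hdist
    obtain ⟨hd1, hd2⟩ := max_lt_iff.mp hdist
    have hδ : min (ε / (4 * P)) 1 ≤ ε / (4 * P) := min_le_left _ _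
    have h1d : 1 - r.1 < ε / (4 * P) := by
      have : dist r.1 (1 : ℝ) = 1 - r.1 := by
        rw [Real.dist_eq, abs_of_neg (by linarith : r.1 - 1 < 0)]; ring
      rw [this] at hd1; linarith
    have h2d : 1 - r.2 < ε / (4 * P) := by
      have : dist r.2 (1 : ℝ) = 1 - r.2 := by
        rw [Real.dist_eq, abs_of_neg (by linarith : r.2 - 1 < 0)]; ring
      rw [this] at hd2; linarith
    have key := abel_est a (Real.sqrt D) hC θ r h10 h11 h20 h21 L B (ε / 4) K hBbound
      (fun N hN1 hN2 => by
        have := hK N (Prod.le_def.mpr ⟨hN1, hN2⟩)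
        rw [dist_eq_norm] at this
        exact this.le)
    rw [dist_eq_norm]
    have e1 : (K.1 : ℝ) * (1 - r.1) ≤ (K.1 : ℝ) * (ε / (4 * P)) :=
      mul_le_mul_of_nonneg_left h1d.le (Nat.cast_nonneg _)
    have e2 : (K.2 : ℝ) * (1 - r.2) ≤ (K.2 : ℝ) * (ε / (4 * P)) :=
      mul_le_mul_of_nonneg_left h2d.le (Nat.cast_nonneg _)
    have e3 : B * ((K.1 : ℝ) * (1 - r.1) + (K.2 : ℝ) * (1 - r.2))
        ≤ (B * ((K.1 : ℝ) + (K.2 : ℝ))) * (ε / (4 * P)) := by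
      have := mul_le_mul_of_nonneg_left (add_le_add e1 e2) hB0
      calc B * ((K.1 : ℝ) * (1 - r.1) + (K.2 : ℝ) * (1 - r.2))
          ≤ B * ((K.1 : ℝ) * (ε / (4 * P)) + (K.2 : ℝ) * (ε / (4 * P))) := this
        _ = (B * ((K.1 : ℝ) + (K.2 : ℝ))) * (ε / (4 * P)) := by ring
    have hX : 0 < ε / (4 * P) := by positivity
    have hPX : P * (ε / (4 * P)) = ε / 4 := by field_simp
    have e4 : (B * ((K.1 : ℝ) + (K.2 : ℝ))) * (ε / (4 * P)) < ε / 4 := by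
      have hid : B * ((K.1 : ℝ) + (K.2 : ℝ)) = P - 1 := by rw [hP]; ring
      rw [hid]
      nlinarith
    calc ‖abelMean2 a r θ - L‖
        ≤ ε / 4 + B * ((K.1 : ℝ) * (1 - r.1) + (K.2 : ℝ) * (1 - r.2)) := key
      _ < ε / 4 + ε / 4 := by linarith
      _ < ε := by linarith
end
end

section
/- Let H be a complex Hilbert space. For θ ∈ [0,2π) and h ∈ (0,1), define R_{h,θ} f = Σ_{k=0}^{∞} a_k (sin(kh)/(kh)) e^{ikθ} (with the convention sin(0·h)/(0·h) = 1) and S_{N,θ} f = Σ_{k=0}^{N} a_k e^{ikθ}, for f ∈ D(𝔻, H). Then there is an absolute constant c > 0 such that whenever N ≥ 1 and 1/(N+1) ≤ h < 1/N, one has ‖R_{h,θ} f − S_{N,θ} f‖_H ≤ c ‖f‖_{D(𝔻,H)}; moreover, for each fixed f ∈ D(𝔻, H), sup{ ‖R_{h,θ} f − S_{N,θ} f‖_H : θ ∈ [0,2π), 1/(N+1) ≤ h < 1/N } → 0 as N → ∞. -/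
open MeasureTheory Filter Complex Set

noncomputable section

/-- The normalized sinc factor `sin(kh)/(kh)`, with value `1` for `k = 0`. -/
def sincFactor (k : ℕ) (h : ℝ) : ℝ :=
  if k = 0 then 1 else Real.sin (k * h) / (k * h)

/-- The averaging operator `R_{h,θ} f = ∑_{k=0}^{∞} a_k (sin(kh)/(kh)) e^{ikθ}`. -/
def sincMean1 {H : Type*} [NormedAddCommGroup H] [NormedSpace ℂ H]
    (a : ℕ → H) (θ h : ℝ) : H :=
  ∑' k : ℕ, (((sincFactor k h : ℝ) : ℂ) * Complex.exp (Complex.I * k * θ)) • a k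

def dCoef (N : ℕ) (h : ℝ) (k : ℕ) : ℝ :=
  if k ≤ N then sincFactor k h - 1 else sincFactor k h

lemma cs_tsum (u v : ℕ → ℝ) (hu : ∀ k, 0 ≤ u k) (hv : ∀ k, 0 ≤ v k)
    (hu2 : Summable fun k => u k ^ 2) (hv2 : Summable fun k => v k ^ 2) :
    Summable (fun k => u k * v k) ∧
    ∑' k, u k * v k ≤ Real.sqrt (∑' k, u k ^ 2) * Real.sqrt (∑' k, v k ^ 2) := by
  have hsum : Summable fun k => u k * v k := by
    refine Summable.of_nonneg_of_le (fun k => mul_nonneg (hu k) (hv k))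
      (fun k => ?_) ((hu2.add hv2).div_const 2)
    nlinarith [sq_nonneg (u k - v k)]
  refine ⟨hsum, Summable.tsum_le_of_sum_le hsum fun s => ?_⟩
  have h1 : (∑ i ∈ s, u i * v i) ^ 2 ≤ (∑ i ∈ s, u i ^ 2) * ∑ i ∈ s, v i ^ 2 :=
    Finset.sum_mul_sq_le_sq_mul_sq s u v
  have h2 : (∑ i ∈ s, u i ^ 2) ≤ ∑' k, u k ^ 2 := Summable.sum_le_tsum s (fun k _ => sq_nonneg _) hu2
  have h3 : (∑ i ∈ s, v i ^ 2) ≤ ∑' k, v k ^ 2 := Summable.sum_le_tsum s (fun k _ => sq_nonneg _) hv2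
  have h4 : 0 ≤ ∑ i ∈ s, u i * v i := Finset.sum_nonneg fun i _ => mul_nonneg (hu i) (hv i)
  rw [← Real.sqrt_mul (tsum_nonneg fun k => sq_nonneg _)]
  rw [show (∑ i ∈ s, u i * v i) = Real.sqrt ((∑ i ∈ s, u i * v i)^2) from (Real.sqrt_sq h4).symm]
  apply Real.sqrt_le_sqrt
  calc (∑ i ∈ s, u i * v i) ^ 2 ≤ (∑ i ∈ s, u i ^ 2) * ∑ i ∈ s, v i ^ 2 := h1
    _ ≤ (∑' k, u k ^ 2) * ∑' k, v k ^ 2 := by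
        apply mul_le_mul h2 h3 (Finset.sum_nonneg fun i _ => sq_nonneg _)
          (tsum_nonneg fun k => sq_nonneg _)

lemma abs_sincFactor_sub_one_le {k : ℕ} {h : ℝ} (hh : 0 < h) (hk : (k:ℝ) * h < 1) :
    |sincFactor k h - 1| ≤ ((k:ℝ) * h) ^ 2 / 4 := by
  rcases Nat.eq_zero_or_pos k with rfl | hk0
  · simp [sincFactor]
  · have hx : 0 < (k:ℝ) * h := mul_pos (by exact_mod_cast hk0) hh
    have hs1 : Real.sin ((k:ℝ)*h) < (k:ℝ)*h := Real.sin_lt hx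
    have hs2 : (k:ℝ)*h - ((k:ℝ)*h)^3/4 < Real.sin ((k:ℝ)*h) :=
      by have := Real.sin_gt_sub_cube hx; nlinarith [pow_pos hx 3]
    rw [sincFactor, if_neg hk0.ne']
    rw [_root_.abs_sub_comm, _root_.abs_of_nonneg (by rw [sub_nonneg, div_le_one hx]; exact hs1.le)]
    rw [sub_le_iff_le_add]
    have h5 : (1 - ((k:ℝ)*h)^2/4) ≤ Real.sin ((k:ℝ)*h) / ((k:ℝ)*h) := by
      rw [le_div_iff₀ hx]; nlinarith
    linarith

lemma abs_sincFactor_le {k : ℕ} {h : ℝ} (hk : k ≠ 0) (hh : 0 < h) :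
    |sincFactor k h| ≤ 1 / ((k:ℝ) * h) := by
  have hx : 0 < (k:ℝ) * h := mul_pos (by positivity ) hh
  rw [sincFactor, if_neg hk, _root_.abs_div, _root_.abs_of_pos hx, div_le_div_iff₀ hx hx]
  have := Real.abs_sin_le_one ((k:ℝ)*h)
  nlinarith

lemma hasSum_telescope (N : ℕ) :
    HasSum (fun j : ℕ => (1:ℝ)/(((j:ℝ)+N+1)*((j:ℝ)+N+2))) (1/((N:ℝ)+1)) := by
  have hf : ∀ j : ℕ, (1:ℝ)/(((j:ℝ)+N+1)*((j:ℝ)+N+2))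
      = 1/((j:ℝ)+N+1) - 1/((j:ℝ)+N+2) := by
    intro j
    have h1 : ((j:ℝ)+N+1) ≠ 0 := by positivity
    have h2 : ((j:ℝ)+N+2) ≠ 0 := by positivity
    field_simp
    ring
  have hpos : ∀ j : ℕ, (0:ℝ) ≤ 1/(((j:ℝ)+N+1)*((j:ℝ)+N+2)) := fun j => by positivity
  apply (hasSum_iff_tendsto_nat_of_nonneg hpos _).mpr
  have key : ∀ n : ℕ, ∑ j ∈ Finset.range n, (1:ℝ)/(((j:ℝ)+N+1)*((j:ℝ)+N+2))
      = 1/((N:ℝ)+1) - 1/((n:ℝ)+N+1) := by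
    intro n
    have h0 := Finset.sum_range_sub' (fun j : ℕ => (1:ℝ)/((j:ℝ)+N+1)) n
    push_cast at h0
    rw [show (1:ℝ)/((N:ℝ)+1) - 1/((n:ℝ)+N+1) = 1 / ((0:ℝ) + ↑N + 1) - 1 / (↑n + ↑N + 1) by ring_nf, ← h0]
    apply Finset.sum_congr rfl
    intro j _
    rw [hf j]
    push_cast
    ring_nf
  simp only [key]
  have : Tendsto (fun n : ℕ => 1/((n:ℝ)+N+1)) atTop (nhds 0) := by
    apply Tendsto.comp tendsto_inv_atTop_zero ?_ |>.congr (fun n => by rw [Function.comp, one_div])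
    apply tendsto_atTop_add_const_right
    apply tendsto_atTop_add_const_right
    exact tendsto_natCast_atTop_atTop
  simpa using (tendsto_const_nhds.sub this)

lemma dCoef_abs_le_head {N k : ℕ} {h : ℝ} (hh0 : 0 < h) (hNh : (N:ℝ)*h < 1) (hk : k ≤ N) :
    |dCoef N h k| ≤ ((k:ℝ)*h)^2/4 := by
  rw [dCoef, if_pos hk]
  refine abs_sincFactor_sub_one_le hh0 (lt_of_le_of_lt ?_ hNh)
  have : (k:ℝ) ≤ N := by exact_mod_cast hk
  nlinarith

lemma dCoef_abs_le_tail {N k : ℕ} {h : ℝ} (h1 : 1/((N:ℝ)+1) ≤ h) (hh0 : 0 < h) (hk : N < k) :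
    |dCoef N h k| ≤ ((N:ℝ)+1)/k := by
  rw [dCoef, if_neg (by omega)]
  refine le_trans (abs_sincFactor_le (by omega) hh0) ?_
  have hkpos : (0:ℝ) < k := by exact_mod_cast Nat.pos_of_ne_zero (by omega)
  rw [div_le_iff₀ (by positivity : (0:ℝ) < (N:ℝ)+1)] at h1
  have hd : (k:ℝ)/((N:ℝ)+1) ≤ (k:ℝ)*h := by
    rw [div_le_iff₀ (by positivity)]
    nlinarith
  calc 1/((k:ℝ)*h) ≤ 1/((k:ℝ)/((N:ℝ)+1)) :=
        one_div_le_one_div_of_le (by positivity) hd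
    _ = ((N:ℝ)+1)/k := by rw [one_div_div]

lemma weight_bound {N : ℕ} {h : ℝ} (hN : 1 ≤ N) (h1 : 1/((N:ℝ)+1) ≤ h) (h2 : h < 1/(N:ℝ)) :
    Summable (fun k : ℕ => (dCoef N h k)^2 / ((k:ℝ)+1)) ∧
    ∑' k : ℕ, (dCoef N h k)^2 / ((k:ℝ)+1) ≤ 2 := by
  have hN0 : (0:ℝ) < N := by exact_mod_cast hN
  have hh0 : 0 < h := lt_of_lt_of_le (by positivity) h1
  have hNh : (N:ℝ)*h < 1 := by
    have := (mul_lt_mul_of_pos_left h2 hN0)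
    rwa [mul_one_div, div_self hN0.ne'] at this
  set w : ℕ → ℝ := fun k => (dCoef N h k)^2 / ((k:ℝ)+1) with hw
  have hwpos : ∀ k, 0 ≤ w k := fun k => by positivity
  -- tail comparison
  have hT := (hasSum_telescope N).mul_left ((N:ℝ)+1)
  rw [mul_one_div, div_self (by positivity)] at hT
  have htail_le : ∀ j : ℕ, w (j + (N+1)) ≤ ((N:ℝ)+1) * (1/(((j:ℝ)+N+1)*((j:ℝ)+N+2))) := by
    intro j
    have hk : N < j + (N+1) := by omega
    have hc : ((j + (N+1) : ℕ):ℝ) = (j:ℝ)+N+1 := by push_cast; ring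
    have hb := dCoef_abs_le_tail h1 hh0 hk
    rw [hc] at hb
    have hb0 : 0 ≤ |dCoef N h (j + (N+1))| := _root_.abs_nonneg _
    have hsq : (dCoef N h (j + (N+1)))^2 ≤ (((N:ℝ)+1)/((j:ℝ)+N+1))^2 := by
      rw [← _root_.sq_abs]; exact pow_le_pow_left₀ hb0 hb 2
    have hx : (0:ℝ) < (j:ℝ)+N+1 := by positivity
    have hNk : (N:ℝ)+1 ≤ (j:ℝ)+N+1 := by linarith [Nat.cast_nonneg (α := ℝ) j]
    rw [hw]
    simp only [hc]
    rw [div_le_iff₀ (by positivity : (0:ℝ) < (j:ℝ)+N+1+1)]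
    have e1 : ((N:ℝ)+1) * (1/(((j:ℝ)+N+1)*((j:ℝ)+N+2))) * ((j:ℝ)+N+1+1)
        = ((N:ℝ)+1)/((j:ℝ)+N+1) := by
      field_simp
      ring
    rw [e1]
    calc (dCoef N h (j + (N+1)))^2 ≤ (((N:ℝ)+1)/((j:ℝ)+N+1))^2 := hsq
      _ ≤ ((N:ℝ)+1)/((j:ℝ)+N+1) := by
          have hx1 : ((N:ℝ)+1)/((j:ℝ)+N+1) ≤ 1 := by
            rw [div_le_one hx]; exact hNk
          nlinarith [div_nonneg (by positivity : (0:ℝ) ≤ (N:ℝ)+1) hx.le]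
  have htail_sum : Summable (fun j => w (j + (N+1))) :=
    Summable.of_nonneg_of_le (fun j => hwpos _) htail_le hT.summable
  have hwsum : Summable w := (summable_nat_add_iff (N+1)).mp htail_sum
  refine ⟨hwsum, ?_⟩
  rw [← Summable.sum_add_tsum_nat_add (N+1) hwsum]
  have htail_tsum : ∑' j, w (j + (N+1)) ≤ 1 := by
    calc ∑' j, w (j + (N+1)) ≤ ∑' j : ℕ, ((N:ℝ)+1) * (1/(((j:ℝ)+N+1)*((j:ℝ)+N+2))) :=
          Summable.tsum_le_tsum htail_le htail_sum hT.summable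
      _ = 1 := hT.tsum_eq
  have hhle1 : h ≤ 1 := by
    refine le_of_lt (lt_of_lt_of_le h2 ?_)
    rw [div_le_one hN0]; exact_mod_cast hN
  have hterm : ∀ k ∈ Finset.range (N+1), w k ≤ h/16 := by
    intro k hkmem
    have hk : k ≤ N := by
      rw [Finset.mem_range, Nat.lt_succ_iff] at hkmem; exact hkmem
    have hb := dCoef_abs_le_head hh0 hNh hk
    have hkc : (0:ℝ) ≤ (k:ℝ) := Nat.cast_nonneg k
    have hx0 : (0:ℝ) ≤ (k:ℝ)*h := by positivity
    have hx1 : (k:ℝ)*h ≤ 1 := by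
      refine le_of_lt (lt_of_le_of_lt ?_ hNh)
      have : (k:ℝ) ≤ N := by exact_mod_cast hk
      nlinarith
    have hd2 : (dCoef N h k)^2 ≤ ((k:ℝ)*h)/16 := by
      have h4 : ((k:ℝ)*h)^4 ≤ (k:ℝ)*h := by
        calc ((k:ℝ)*h)^4 = ((k:ℝ)*h)*((k:ℝ)*h)^3 := by ring
          _ ≤ ((k:ℝ)*h)*1 := mul_le_mul_of_nonneg_left (pow_le_one₀ hx0 hx1) hx0
          _ = (k:ℝ)*h := mul_one _
      have h5 := mul_self_le_mul_self (_root_.abs_nonneg (dCoef N h k)) hb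
      rw [_root_.abs_mul_abs_self (dCoef N h k)] at h5
      nlinarith
    rw [hw]
    rw [div_le_iff₀ (by positivity : (0:ℝ) < (k:ℝ)+1)]
    nlinarith
  have hhead : ∑ k ∈ Finset.range (N+1), w k ≤ 1 := by
    have hs := Finset.sum_le_card_nsmul (Finset.range (N+1)) w (h/16) hterm
    rw [Finset.card_range, nsmul_eq_mul] at hs
    have hNh2 : ((N:ℝ)+1)*h ≤ 2 := by nlinarith
    have : ((N+1:ℕ):ℝ) * (h/16) ≤ 1 := by push_cast; nlinarith
    linarith
  linarith

lemma coeff_norm {H : Type*} [NormedAddCommGroup H] [NormedSpace ℂ H]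
    (r θ : ℝ) (k : ℕ) (a : H) :
    ‖((r:ℂ) * Complex.exp (Complex.I * k * θ)) • a‖ = |r| * ‖a‖ := by
  rw [norm_smul, norm_mul]
  have he : ‖Complex.exp (Complex.I * k * θ)‖ = 1 := by
    rw [Complex.norm_exp]
    simp [Complex.mul_re]
  rw [he, mul_one, Complex.norm_real, Real.norm_eq_abs]

lemma norm_diff_le {H : Type*} [NormedAddCommGroup H] [NormedSpace ℂ H] [CompleteSpace H]
    (a : ℕ → H) (ha : Summable fun k : ℕ => ((k:ℝ)+1) * ‖a k‖^2)
    {N M : ℕ} (hN : 1 ≤ N) (hMN : M ≤ N) {h : ℝ}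
    (h1 : 1/((N:ℝ)+1) ≤ h) (h2 : h < 1/(N:ℝ)) (θ : ℝ) :
    ‖sincMean1 a θ h - partialSum1 a θ N‖ ≤
      (∑ k ∈ Finset.range (M+1), |dCoef N h k| * ‖a k‖)
        + Real.sqrt 2 * Real.sqrt (∑' j : ℕ, ((((j+(M+1)):ℕ):ℝ)+1) * ‖a (j+(M+1))‖^2) := by
  obtain ⟨hwsum, hwle⟩ := weight_bound hN h1 h2
  set u : ℕ → ℝ := fun k => Real.sqrt ((dCoef N h k)^2/((k:ℝ)+1)) with hu_def
  set v : ℕ → ℝ := fun k => Real.sqrt (((k:ℝ)+1)*‖a k‖^2) with hv_def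
  have hu2 : ∀ k, u k ^ 2 = (dCoef N h k)^2/((k:ℝ)+1) := fun k =>
    Real.sq_sqrt (by positivity)
  have hv2 : ∀ k, v k ^ 2 = ((k:ℝ)+1)*‖a k‖^2 := fun k =>
    Real.sq_sqrt (by positivity)
  have huv : ∀ k, u k * v k = |dCoef N h k| * ‖a k‖ := by
    intro k
    rw [hu_def, hv_def]
    simp only
    rw [← Real.sqrt_mul (by positivity)]
    have he : (dCoef N h k)^2/((k:ℝ)+1) * (((k:ℝ)+1)*‖a k‖^2)
        = (|dCoef N h k| * ‖a k‖)^2 := by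
      rw [mul_pow, _root_.sq_abs]
      field_simp
    rw [he, Real.sqrt_sq (by positivity)]
  have hu2su : Summable fun k => u k ^ 2 := by
    simpa only [hu2] using hwsum
  have hv2su : Summable fun k => v k ^ 2 := by
    simpa only [hv2] using ha
  have hD : Summable (fun k => |dCoef N h k| * ‖a k‖) := by
    have := (cs_tsum u v (fun k => Real.sqrt_nonneg _) (fun k => Real.sqrt_nonneg _) hu2su hv2su).1
    simpa only [huv] using this
  -- series manipulation
  set t : ℕ → H := fun k => (((sincFactor k h : ℝ):ℂ) * Complex.exp (Complex.I * k * θ)) • a k with ht_def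
  set s : ℕ → H := fun k => if k ≤ N then Complex.exp (Complex.I * k * θ) • a k else 0 with hs_def
  have hts : ∀ k, t k - s k = (((dCoef N h k : ℝ):ℂ) * Complex.exp (Complex.I * k * θ)) • a k := by
    intro k
    by_cases hk : k ≤ N
    · rw [ht_def, hs_def, dCoef]
      simp only [if_pos hk]
      rw [Complex.ofReal_sub, Complex.ofReal_one, sub_mul, one_mul, sub_smul]
    · rw [ht_def, hs_def, dCoef]
      simp only [if_neg hk]
      rw [sub_zero]
  have ht_norm : ∀ k, ‖t k - s k‖ = |dCoef N h k| * ‖a k‖ := by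
    intro k; rw [hts k]; exact coeff_norm _ _ _ _
  have hts_sum : Summable (fun k => t k - s k) := by
    apply Summable.of_norm
    simpa only [ht_norm] using hD
  have hs_sum : Summable s := by
    apply summable_of_ne_finset_zero (s := Finset.range (N+1))
    intro k hk
    rw [hs_def]
    simp only
    rw [if_neg (by simp [Finset.mem_range, Nat.lt_succ_iff] at hk; omega)]
  have ht_sum : Summable t := by
    have := hts_sum.add hs_sum
    simpa using this
  have hdiff : sincMean1 a θ h - partialSum1 a θ N = ∑' k, (t k - s k) := by
    rw [Summable.tsum_sub ht_sum hs_sum]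
    congr 1
    rw [partialSum1, tsum_eq_sum (s := Finset.range (N+1))
      (fun k hk => by rw [hs_def]; simp only; rw [if_neg (by simp [Finset.mem_range, Nat.lt_succ_iff] at hk; omega)])]
    apply Finset.sum_congr rfl
    intro k hk
    rw [hs_def]
    simp only
    rw [if_pos (by simp [Finset.mem_range, Nat.lt_succ_iff] at hk; omega)]
  rw [hdiff]
  have hnorm_le : ‖∑' k, (t k - s k)‖ ≤ ∑' k, |dCoef N h k| * ‖a k‖ := by
    refine le_trans (norm_tsum_le_tsum_norm (by simpa only [ht_norm] using hD)) ?_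
    rw [tsum_congr ht_norm]
  refine le_trans hnorm_le ?_
  rw [← Summable.sum_add_tsum_nat_add (M+1) hD]
  gcongr
  -- tail bound via Cauchy-Schwarz on shifted sequences
  have hu2s : Summable fun j => u (j+(M+1)) ^ 2 := by
    apply (summable_nat_add_iff (M+1)).mpr hu2su
  have hv2s : Summable fun j => v (j+(M+1)) ^ 2 := by
    apply (summable_nat_add_iff (M+1)).mpr hv2su
  obtain ⟨_, hcs⟩ := cs_tsum (fun j => u (j+(M+1))) (fun j => v (j+(M+1)))
    (fun k => Real.sqrt_nonneg _) (fun k => Real.sqrt_nonneg _) hu2s hv2s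
  simp only [huv, hu2, hv2] at hcs
  refine le_trans hcs ?_
  have hA : ∑' (k : ℕ), dCoef N h (k + (M + 1)) ^ 2 / ((((k + (M + 1)):ℕ):ℝ) + 1) ≤ 2 := by
    have hsplit := Summable.sum_add_tsum_nat_add (M+1) hwsum
    have hhead : 0 ≤ ∑ k ∈ Finset.range (M+1), dCoef N h k ^2/((k:ℝ)+1) :=
      Finset.sum_nonneg fun k _ => by positivity
    linarith
  gcongr

/-- **Lemma (comparison of averages with partial sums).** There is an absolute constant
`c > 0` such that `‖R_{h,θ} f − S_{N,θ} f‖ ≤ c ‖f‖_{𝒟(𝔻,H)}` whenever `N ≥ 1` and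
`1/(N+1) ≤ h < 1/N`; and for each fixed `f`, the supremum of `‖R_{h,θ} f − S_{N,θ} f‖`
over all such `h` and all `θ` tends to `0` as `N → ∞`. -/
theorem sinc_mean_comparison (H : Type*) [NormedAddCommGroup H] [InnerProductSpace ℂ H]
    [CompleteSpace H] :
    (∃ c : ℝ, 0 < c ∧
      ∀ (a : ℕ → H), (Summable fun k : ℕ => ((k : ℝ) + 1) * ‖a k‖ ^ 2) →
        ∀ N : ℕ, 1 ≤ N → ∀ h : ℝ, 1 / ((N : ℝ) + 1) ≤ h → h < 1 / (N : ℝ) →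
          ∀ θ ∈ Set.Ico (0 : ℝ) (2 * Real.pi),
            ‖sincMean1 a θ h - partialSum1 a θ N‖ ≤
              c * Real.sqrt (∑' k : ℕ, ((k : ℝ) + 1) * ‖a k‖ ^ 2)) ∧
    ∀ (a : ℕ → H), (Summable fun k : ℕ => ((k : ℝ) + 1) * ‖a k‖ ^ 2) →
      ∀ ε : ℝ, 0 < ε → ∃ N₀ : ℕ, ∀ N : ℕ, N₀ ≤ N → 1 ≤ N →
        ∀ h : ℝ, 1 / ((N : ℝ) + 1) ≤ h → h < 1 / (N : ℝ) →
          ∀ θ ∈ Set.Ico (0 : ℝ) (2 * Real.pi),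
            ‖sincMean1 a θ h - partialSum1 a θ N‖ < ε := by
  constructor
  · refine ⟨2, by norm_num, ?_⟩
    intro a ha N hN h h1 h2 θ _
    have hkey := norm_diff_le a ha hN (Nat.zero_le N) h1 h2 θ
    have hd0 : dCoef N h 0 = 0 := by
      rw [dCoef, if_pos (Nat.zero_le N), sincFactor, if_pos rfl, sub_self]
    rw [Finset.sum_range_one, hd0, _root_.abs_zero, zero_mul, zero_add] at hkey
    refine le_trans hkey ?_
    have htail_le : (∑' j : ℕ, ((((j+(0+1)):ℕ):ℝ)+1) * ‖a (j+(0+1))‖^2)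
        ≤ ∑' k : ℕ, ((k : ℝ) + 1) * ‖a k‖ ^ 2 := by
      have hsplit := Summable.sum_add_tsum_nat_add (f := fun k : ℕ => ((k : ℝ) + 1) * ‖a k‖ ^ 2) 1 ha
      have h0 : (0:ℝ) ≤ ∑ k ∈ Finset.range 1, ((k : ℝ) + 1) * ‖a k‖ ^ 2 :=
        Finset.sum_nonneg fun k _ => by positivity
      simp only [zero_add]
      linarith
    have h1' : Real.sqrt (∑' j : ℕ, ((((j+(0+1)):ℕ):ℝ)+1) * ‖a (j+(0+1))‖^2)
        ≤ Real.sqrt (∑' k : ℕ, ((k : ℝ) + 1) * ‖a k‖ ^ 2) := Real.sqrt_le_sqrt htail_le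
    have h2' : Real.sqrt 2 ≤ 2 := by
      nlinarith [Real.sq_sqrt (show (0:ℝ) ≤ 2 by norm_num), Real.sqrt_nonneg 2]
    exact mul_le_mul h2' h1' (Real.sqrt_nonneg _) (by norm_num)
  · intro a ha ε hε
    set f := fun k : ℕ => ((k : ℝ) + 1) * ‖a k‖ ^ 2 with hf_def
    have hf0 : ∀ k, 0 ≤ f k := fun k => by positivity
    -- choose M with small tail
    have htt : Tendsto (fun i => ∑' k, f (k + i)) atTop (nhds 0) := tendsto_sum_nat_add f
    have hev : ∀ᶠ i in atTop, ∑' k, f (k + i) < (ε/4)^2 := by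
      refine (htt.eventually (eventually_lt_nhds ?_)).mono fun i hi => hi
      positivity
    obtain ⟨i₀, hi₀⟩ := eventually_atTop.mp hev
    set M := i₀ with hM_def
    have hMtail : ∑' k, f (k + (M+1)) < (ε/4)^2 := hi₀ (M+1) (by omega)
    set C := ∑ k ∈ Finset.range (M+1), ‖a k‖ with hC_def
    have hC0 : 0 ≤ C := Finset.sum_nonneg fun k _ => norm_nonneg _
    obtain ⟨K, hK⟩ := exists_nat_gt ((M:ℝ)^2*C/(2*ε))
    have hK1 : 1 ≤ K := by
      by_contra hcon
      push_neg at hcon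
      interval_cases K
      simp only [Nat.cast_zero] at hK
      have : 0 ≤ (M:ℝ)^2*C/(2*ε) := by positivity
      linarith
    refine ⟨max M K, ?_⟩
    intro N hN₀ hN h h1 h2 θ _
    have hMN : M ≤ N := le_trans (le_max_left _ _) hN₀
    have hKN : K ≤ N := le_trans (le_max_right _ _) hN₀
    have hN0 : (0:ℝ) < N := by exact_mod_cast hN
    have hh0 : 0 < h := lt_of_lt_of_le (by positivity) h1
    have hNh : (N:ℝ)*h < 1 := by
      have := (mul_lt_mul_of_pos_left h2 hN0)
      rwa [mul_one_div, div_self hN0.ne'] at this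
    have hkey := norm_diff_le a ha hN hMN h1 h2 θ
    -- head bound
    have hhead : (∑ k ∈ Finset.range (M+1), |dCoef N h k| * ‖a k‖)
        ≤ ((M:ℝ)^2/(4*(N:ℝ)^2)) * C := by
      rw [hC_def, Finset.mul_sum]
      apply Finset.sum_le_sum
      intro k hk
      rw [Finset.mem_range, Nat.lt_succ_iff] at hk
      have hb := dCoef_abs_le_head hh0 hNh (le_trans hk hMN)
      have hkM : (k:ℝ) ≤ M := by exact_mod_cast hk
      have hMR : (0:ℝ) ≤ M := Nat.cast_nonneg M
      have hbb : ((k:ℝ)*h)^2/4 ≤ (M:ℝ)^2/(4*(N:ℝ)^2) := by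
        have hkh : (k:ℝ)*h ≤ (M:ℝ)/(N:ℝ) := by
          calc (k:ℝ)*h ≤ (M:ℝ)*h := by nlinarith
            _ ≤ (M:ℝ)/(N:ℝ) := by
                rw [le_div_iff₀ hN0]
                nlinarith
        have hkh0 : (0:ℝ) ≤ (k:ℝ)*h := by positivity
        have hthis := mul_self_le_mul_self hkh0 hkh
        have hNN : ((M:ℝ)/(N:ℝ))*((M:ℝ)/(N:ℝ)) = (M:ℝ)^2/((N:ℝ)^2) := by
          field_simp
        have hsq : ((k:ℝ)*h)^2 ≤ (M:ℝ)^2/(N:ℝ)^2 := by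
          rw [pow_two]
          rw [hNN] at hthis
          exact hthis
        calc ((k:ℝ)*h)^2/4 ≤ ((M:ℝ)^2/(N:ℝ)^2)/4 := by linarith
          _ = (M:ℝ)^2/(4*(N:ℝ)^2) := by ring
      exact mul_le_mul (le_trans hb hbb) le_rfl (norm_nonneg _) (by positivity)
    have hheadlt : ((M:ℝ)^2/(4*(N:ℝ)^2)) * C < ε/2 := by
      have hKR : (K:ℝ) ≤ N := by exact_mod_cast hKN
      have hK1R : (1:ℝ) ≤ K := by exact_mod_cast hK1
      rw [div_mul_eq_mul_div, div_lt_iff₀ (by positivity)]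
      have hNsq : (N:ℝ) ≤ (N:ℝ)^2 := by nlinarith
      rw [div_lt_iff₀ (by positivity)] at hK
      have hKe : (K:ℝ)*(2*ε) ≤ (N:ℝ)^2*(2*ε) :=
        mul_le_mul_of_nonneg_right (hKR.trans hNsq) (by positivity)
      have he : ε/2*(4*(N:ℝ)^2) = (N:ℝ)^2*(2*ε) := by ring
      linarith
    -- tail bound
    have htaillt : Real.sqrt 2 * Real.sqrt (∑' j : ℕ, ((((j+(M+1)):ℕ):ℝ)+1) * ‖a (j+(M+1))‖^2)
        < ε/2 := by
      have hsq : Real.sqrt (∑' j : ℕ, ((((j+(M+1)):ℕ):ℝ)+1) * ‖a (j+(M+1))‖^2) < ε/4 := by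
        rw [show (∑' j : ℕ, ((((j+(M+1)):ℕ):ℝ)+1) * ‖a (j+(M+1))‖^2) = ∑' k, f (k + (M+1)) from rfl]
        refine (Real.sqrt_lt' (by positivity)).mpr ?_
        exact hMtail
      have h2' : Real.sqrt 2 ≤ 2 := by
        nlinarith [Real.sq_sqrt (show (0:ℝ) ≤ 2 by norm_num), Real.sqrt_nonneg 2]
      have hT0 : 0 ≤ Real.sqrt (∑' j : ℕ, ((((j+(M+1)):ℕ):ℝ)+1) * ‖a (j+(M+1))‖^2) :=
        Real.sqrt_nonneg _
      calc Real.sqrt 2 * Real.sqrt (∑' j : ℕ, ((((j+(M+1)):ℕ):ℝ)+1) * ‖a (j+(M+1))‖^2)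
          ≤ 2 * Real.sqrt (∑' j : ℕ, ((((j+(M+1)):ℕ):ℝ)+1) * ‖a (j+(M+1))‖^2) :=
            mul_le_mul_of_nonneg_right h2' hT0
        _ < 2 * (ε/4) := by
            exact mul_lt_mul_of_pos_left hsq two_pos
        _ = ε/2 := by ring
    calc ‖sincMean1 a θ h - partialSum1 a θ N‖
        ≤ (∑ k ∈ Finset.range (M+1), |dCoef N h k| * ‖a k‖)
          + Real.sqrt 2 * Real.sqrt (∑' j : ℕ, ((((j+(M+1)):ℕ):ℝ)+1) * ‖a (j+(M+1))‖^2) := hkey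
      _ < ε/2 + ε/2 := by
          apply add_lt_add_of_le_of_lt (le_trans hhead hheadlt.le) htaillt
      _ = ε := by ring
end
end

section
/- Let H be a complex Hilbert space, let f ∈ D(𝔻², H), and let θ = (θ₁,θ₂) ∈ [0,2π)². Define the slice functions f¹(z) = f(z,0) and f²(w) = f(0,w), which belong to D(𝔻, H). If the radial variations V₂f(θ) = ∫_{[0,1]²} ‖∂_{r₁}∂_{r₂} f_r(θ)‖_H dr, V₁f¹(θ₁) = ∫_0^1 ‖∂_{ρ₁} f¹_{ρ₁}(θ₁)‖_H dρ₁, and V₁f²(θ₂) = ∫_0^1 ‖∂_{ρ₂} f²_{ρ₂}(θ₂)‖_H dρ₂ are all finite, then lim_{r→(1,1), r∈[0,1)²} f_r(θ) exists in H and sup_{r∈[0,1)²} ‖f_r(θ)‖_H < ∞. -/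
open MeasureTheory Filter Complex Set

noncomputable section

/-- The mixed radial derivative
`∂_{r₁}∂_{r₂} f_r(θ) = ∑_α α₁ α₂ r₁^{α₁-1} r₂^{α₂-1} e^{i(α₁θ₁+α₂θ₂)} a_α`. -/
def radialDeriv2 {H : Type*} [NormedAddCommGroup H] [NormedSpace ℂ H]
    (a : ℕ × ℕ → H) (θ r : ℝ × ℝ) : H :=
  ∑' α : ℕ × ℕ, (((α.1 : ℂ) * (r.1 : ℂ) ^ (α.1 - 1)) * ((α.2 : ℂ) * (r.2 : ℂ) ^ (α.2 - 1)) *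
    Complex.exp (Complex.I * ((α.1 : ℂ) * (θ.1 : ℂ) + (α.2 : ℂ) * (θ.2 : ℂ)))) • a α

/-- The one-variable radial derivative `∂_ρ g_ρ(θ) = ∑_k k ρ^{k-1} e^{ikθ} b_k`. -/
def radialDeriv1 {H : Type*} [NormedAddCommGroup H] [NormedSpace ℂ H]
    (b : ℕ → H) (θ ρ : ℝ) : H :=
  ∑' k : ℕ, ((k : ℂ) * (ρ : ℂ) ^ (k - 1) * Complex.exp (Complex.I * k * θ)) • b k

lemma normExpI (x : ℝ) : ‖Complex.exp (Complex.I * (x:ℂ))‖ = 1 := by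
  rw [mul_comm]; exact Complex.norm_exp_ofReal_mul_I x

lemma norm_term1 {H : Type*} [NormedAddCommGroup H] [NormedSpace ℂ H]
    (k : ℕ) {ρ : ℝ} (hρ : 0 ≤ ρ) (φ : ℝ) (v : H) :
    ‖((k:ℂ) * (ρ:ℂ) ^ (k-1) * Complex.exp (Complex.I * k * φ)) • v‖
      = (k:ℝ) * ρ ^ (k-1) * ‖v‖ := by
  have he : Complex.I * (k:ℂ) * (φ:ℂ) = Complex.I * (((k:ℝ) * φ : ℝ) : ℂ) := by
    push_cast; ring
  rw [norm_smul, norm_mul, norm_mul, he, normExpI, mul_one, norm_pow,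
    Complex.norm_natCast, Complex.norm_real, Real.norm_eq_abs, _root_.abs_of_nonneg hρ]

lemma sumDeriv {t : ℝ} (ht0 : 0 ≤ t) (ht1 : t < 1) :
    Summable (fun k : ℕ => (k:ℝ) * t ^ (k-1)) := by
  rw [← summable_nat_add_iff 1]
  have h1 : Summable (fun k : ℕ => (k:ℝ)^1 * t ^ k) :=
    summable_pow_mul_geometric_of_norm_lt_one 1
      (by rwa [Real.norm_eq_abs, _root_.abs_of_nonneg ht0])
  have h2 : Summable (fun k : ℕ => t ^ k) := summable_geometric_of_lt_one ht0 ht1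
  refine (h1.add h2).congr fun k => ?_
  simp; ring

lemma elemInt {t : ℝ} (ht0 : 0 ≤ t) (k : ℕ) :
    ∫ ρ in Ioc (0:ℝ) t, ((k:ℂ) * (ρ:ℂ) ^ (k-1)) =
      (((t ^ k - if k = 0 then 1 else 0 : ℝ)) : ℂ) := by
  calc ∫ ρ in Ioc (0:ℝ) t, ((k:ℂ) * (ρ:ℂ) ^ (k-1))
      = ∫ ρ in Ioc (0:ℝ) t, (((k:ℝ) * ρ ^ (k-1) : ℝ) : ℂ) := by
        refine integral_congr_ae (Eventually.of_forall fun ρ => ?_); push_cast; ring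
    _ = (((∫ ρ in Ioc (0:ℝ) t, ((k:ℝ) * ρ ^ (k-1))) : ℝ) : ℂ) := integral_ofReal
    _ = _ := by
        norm_cast
        cases k with
        | zero => simp
        | succ n =>
          simp only [Nat.succ_ne_zero, if_false, sub_zero, Nat.add_sub_cancel]
          rw [← intervalIntegral.integral_of_le ht0,
            intervalIntegral.integral_const_mul, integral_pow]
          push_cast; field_simp; simp

lemma cont_term1 {H : Type*} [NormedAddCommGroup H] [NormedSpace ℂ H]
    (k : ℕ) (φ : ℝ) (v : H) :
    Continuous (fun ρ : ℝ => ((k:ℂ) * (ρ:ℂ) ^ (k-1) * Complex.exp (Complex.I * k * φ)) • v) := by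
  fun_prop

lemma ftc1 {H : Type*} [NormedAddCommGroup H] [NormedSpace ℂ H] [CompleteSpace H]
    (b : ℕ → H) {C : ℝ} (hb : ∀ k, ‖b k‖ ≤ C) (φ : ℝ) {t : ℝ} (ht0 : 0 ≤ t) (ht1 : t < 1) :
    ∫ ρ in Ioc (0:ℝ) t, radialDeriv1 b φ ρ =
      ∑' k : ℕ, (((t ^ k - if k = 0 then 1 else 0 : ℝ)) : ℂ) •
        (Complex.exp (Complex.I * k * φ) • b k) := by
  have hC : 0 ≤ C := le_trans (norm_nonneg _) (hb 0)
  unfold radialDeriv1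
  rw [integral_tsum (fun k => (cont_term1 k φ (b k)).aestronglyMeasurable) ?fin]
  · refine tsum_congr fun k => ?_
    have hfe : (fun ρ : ℝ => ((k:ℂ) * (ρ:ℂ) ^ (k-1) * Complex.exp (Complex.I * k * φ)) • b k)
        = fun ρ : ℝ => ((k:ℂ) * (ρ:ℂ) ^ (k-1)) • (Complex.exp (Complex.I * k * φ) • b k) := by
      funext ρ; rw [mul_smul]
    rw [hfe, integral_smul_const, elemInt ht0 k]
  case fin =>
    have hsum : Summable (fun k : ℕ => (k:ℝ) * t ^ (k-1) * C) := (sumDeriv ht0 ht1).mul_right C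
    have key : ∀ k : ℕ, (∫⁻ ρ in Ioc (0:ℝ) t,
        ‖((k:ℂ) * (ρ:ℂ) ^ (k-1) * Complex.exp (Complex.I * k * φ)) • b k‖₊)
        ≤ ENNReal.ofReal ((k:ℝ) * t ^ (k-1) * C) := by
      intro k
      have h1 : (∫⁻ ρ in Ioc (0:ℝ) t, ‖((k:ℂ) * (ρ:ℂ) ^ (k-1) *
          Complex.exp (Complex.I * k * φ)) • b k‖₊)
          ≤ ∫⁻ _ρ in Ioc (0:ℝ) t, ENNReal.ofReal ((k:ℝ) * t ^ (k-1) * C) := by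
        refine setLIntegral_mono measurable_const fun ρ hρ => ?_
        rw [← enorm_eq_nnnorm, ← ofReal_norm, norm_term1 k (le_of_lt hρ.1) φ (b k)]
        refine ENNReal.ofReal_le_ofReal ?_
        have h2 : ρ ^ (k-1) ≤ t ^ (k-1) := pow_le_pow_left₀ (le_of_lt hρ.1) hρ.2 _
        have := mul_le_mul_of_nonneg_left h2 (Nat.cast_nonneg k : (0:ℝ) ≤ k)
        calc (k:ℝ) * ρ ^ (k-1) * ‖b k‖ ≤ (k:ℝ) * t ^ (k-1) * ‖b k‖ := by nlinarith [norm_nonneg (b k)]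
          _ ≤ (k:ℝ) * t ^ (k-1) * C := by
            have hkt : 0 ≤ (k:ℝ) * t ^ (k-1) := by positivity
            nlinarith [hb k]
      refine h1.trans ?_
      rw [setLIntegral_const, Real.volume_Ioc]
      calc ENNReal.ofReal ((k:ℝ) * t^(k-1) * C) * ENNReal.ofReal (t - 0)
          ≤ ENNReal.ofReal ((k:ℝ) * t^(k-1) * C) * 1 := by
            refine mul_le_mul_right ?_ _
            simpa using ENNReal.ofReal_le_one.mpr (by linarith)
        _ = _ := mul_one _
    refine ne_top_of_le_ne_top ?_ (ENNReal.tsum_le_tsum key)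
    rw [← ENNReal.ofReal_tsum_of_nonneg (fun k => by positivity) hsum]
    exact ENNReal.ofReal_ne_top

lemma norm_term2 {H : Type*} [NormedAddCommGroup H] [NormedSpace ℂ H]
    (α : ℕ × ℕ) {x y : ℝ} (h1 : 0 ≤ x) (h2 : 0 ≤ y) (θ : ℝ × ℝ) (v : H) :
    ‖(((α.1 : ℂ) * (x : ℂ) ^ (α.1 - 1)) * ((α.2 : ℂ) * (y : ℂ) ^ (α.2 - 1)) *
      Complex.exp (Complex.I * ((α.1 : ℂ) * (θ.1 : ℂ) + (α.2 : ℂ) * (θ.2 : ℂ)))) • v‖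
      = ((α.1:ℝ) * x ^ (α.1 - 1)) * ((α.2:ℝ) * y ^ (α.2 - 1)) * ‖v‖ := by
  have he : Complex.I * ((α.1 : ℂ) * (θ.1 : ℂ) + (α.2 : ℂ) * (θ.2 : ℂ))
      = Complex.I * (((α.1:ℝ) * θ.1 + (α.2:ℝ) * θ.2 : ℝ) : ℂ) := by push_cast; ring
  rw [norm_smul, norm_mul, norm_mul, norm_mul, norm_mul, he, normExpI, mul_one,
    norm_pow, norm_pow, Complex.norm_natCast, Complex.norm_natCast,
    Complex.norm_real, Complex.norm_real, Real.norm_eq_abs, Real.norm_eq_abs,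
    _root_.abs_of_nonneg h1, _root_.abs_of_nonneg h2]

lemma ftc2 {H : Type*} [NormedAddCommGroup H] [NormedSpace ℂ H] [CompleteSpace H]
    (a : ℕ × ℕ → H) {C : ℝ} (hb : ∀ α, ‖a α‖ ≤ C) (θ : ℝ × ℝ) {t₁ t₂ : ℝ}
    (h10 : 0 ≤ t₁) (h11 : t₁ < 1) (h20 : 0 ≤ t₂) (h21 : t₂ < 1) :
    ∫ ρ in Ioc (0:ℝ) t₁ ×ˢ Ioc (0:ℝ) t₂, radialDeriv2 a θ ρ =
      ∑' α : ℕ × ℕ, ((((t₁ ^ α.1 - if α.1 = 0 then 1 else 0) *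
          (t₂ ^ α.2 - if α.2 = 0 then 1 else 0) : ℝ)) : ℂ) •
        (Complex.exp (Complex.I * ((α.1 : ℂ) * (θ.1 : ℂ) + (α.2 : ℂ) * (θ.2 : ℂ))) • a α) := by
  have hC : 0 ≤ C := le_trans (norm_nonneg _) (hb 0)
  unfold radialDeriv2
  rw [integral_tsum ?meas ?fin]
  · refine tsum_congr fun α => ?_
    have hfe : (fun ρ : ℝ × ℝ => (((α.1 : ℂ) * (ρ.1 : ℂ) ^ (α.1 - 1)) *
          ((α.2 : ℂ) * (ρ.2 : ℂ) ^ (α.2 - 1)) *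
          Complex.exp (Complex.I * ((α.1 : ℂ) * (θ.1 : ℂ) + (α.2 : ℂ) * (θ.2 : ℂ)))) • a α)
        = fun ρ : ℝ × ℝ => (((α.1 : ℂ) * (ρ.1 : ℂ) ^ (α.1 - 1)) *
          ((α.2 : ℂ) * (ρ.2 : ℂ) ^ (α.2 - 1))) •
          (Complex.exp (Complex.I * ((α.1 : ℂ) * (θ.1 : ℂ) + (α.2 : ℂ) * (θ.2 : ℂ))) • a α) := by
      funext ρ; rw [mul_smul]
    rw [hfe, integral_smul_const, Measure.volume_eq_prod,
      setIntegral_prod_mul (fun x : ℝ => (α.1 : ℂ) * (x : ℂ) ^ (α.1 - 1))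
        (fun y : ℝ => (α.2 : ℂ) * (y : ℂ) ^ (α.2 - 1)) _ _,
      elemInt h10 α.1, elemInt h20 α.2]
    push_cast
    ring_nf
  case meas =>
    intro α
    refine Continuous.aestronglyMeasurable ?_
    fun_prop
  case fin =>
    have hsum : Summable (fun α : ℕ × ℕ =>
        ((α.1:ℝ) * t₁ ^ (α.1-1)) * ((α.2:ℝ) * t₂ ^ (α.2-1)) * C) :=
      (((sumDeriv h10 h11).mul_of_nonneg (sumDeriv h20 h21)
        (fun k => by positivity) (fun k => by positivity))).mul_right C
    have key : ∀ α : ℕ × ℕ, (∫⁻ ρ in Ioc (0:ℝ) t₁ ×ˢ Ioc (0:ℝ) t₂,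
        ‖(((α.1 : ℂ) * (ρ.1 : ℂ) ^ (α.1 - 1)) * ((α.2 : ℂ) * (ρ.2 : ℂ) ^ (α.2 - 1)) *
          Complex.exp (Complex.I * ((α.1 : ℂ) * (θ.1 : ℂ) + (α.2 : ℂ) * (θ.2 : ℂ)))) • a α‖₊)
        ≤ ENNReal.ofReal (((α.1:ℝ) * t₁ ^ (α.1-1)) * ((α.2:ℝ) * t₂ ^ (α.2-1)) * C) := by
      intro α
      have h1 : (∫⁻ ρ in Ioc (0:ℝ) t₁ ×ˢ Ioc (0:ℝ) t₂,
          ‖(((α.1 : ℂ) * (ρ.1 : ℂ) ^ (α.1 - 1)) * ((α.2 : ℂ) * (ρ.2 : ℂ) ^ (α.2 - 1)) *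
            Complex.exp (Complex.I * ((α.1 : ℂ) * (θ.1 : ℂ) + (α.2 : ℂ) * (θ.2 : ℂ)))) • a α‖₊)
          ≤ ∫⁻ _ρ in Ioc (0:ℝ) t₁ ×ˢ Ioc (0:ℝ) t₂,
            ENNReal.ofReal (((α.1:ℝ) * t₁ ^ (α.1-1)) * ((α.2:ℝ) * t₂ ^ (α.2-1)) * C) := by
        refine setLIntegral_mono measurable_const fun ρ hρ => ?_
        obtain ⟨hρ1, hρ2⟩ := hρ
        rw [← enorm_eq_nnnorm, ← ofReal_norm, norm_term2 α (le_of_lt hρ1.1) (le_of_lt hρ2.1) θ (a α)]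
        refine ENNReal.ofReal_le_ofReal ?_
        have e1 : ρ.1 ^ (α.1-1) ≤ t₁ ^ (α.1-1) := pow_le_pow_left₀ (le_of_lt hρ1.1) hρ1.2 _
        have e2 : ρ.2 ^ (α.2-1) ≤ t₂ ^ (α.2-1) := pow_le_pow_left₀ (le_of_lt hρ2.1) hρ2.2 _
        have p1 : (0:ℝ) ≤ ρ.1 ^ (α.1-1) := pow_nonneg (le_of_lt hρ1.1) _
        have p2 : (0:ℝ) ≤ ρ.2 ^ (α.2-1) := pow_nonneg (le_of_lt hρ2.1) _
        have hn := hb α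
        have hnn := norm_nonneg (a α)
        have c1 : (0:ℝ) ≤ (α.1:ℝ) := Nat.cast_nonneg _
        have c2 : (0:ℝ) ≤ (α.2:ℝ) := Nat.cast_nonneg _
        calc ((α.1:ℝ) * ρ.1 ^ (α.1-1)) * ((α.2:ℝ) * ρ.2 ^ (α.2-1)) * ‖a α‖
            ≤ ((α.1:ℝ) * t₁ ^ (α.1-1)) * ((α.2:ℝ) * t₂ ^ (α.2-1)) * ‖a α‖ := by
              have := mul_le_mul (mul_le_mul_of_nonneg_left e1 c1)
                (mul_le_mul_of_nonneg_left e2 c2) (by positivity) (by positivity)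
              exact mul_le_mul_of_nonneg_right this hnn
          _ ≤ ((α.1:ℝ) * t₁ ^ (α.1-1)) * ((α.2:ℝ) * t₂ ^ (α.2-1)) * C :=
              mul_le_mul_of_nonneg_left hn (by positivity)
      refine h1.trans ?_
      rw [setLIntegral_const, Measure.volume_eq_prod, Measure.prod_prod,
        Real.volume_Ioc, Real.volume_Ioc]
      calc ENNReal.ofReal _ * (ENNReal.ofReal (t₁ - 0) * ENNReal.ofReal (t₂ - 0))
          ≤ ENNReal.ofReal (((α.1:ℝ) * t₁ ^ (α.1-1)) * ((α.2:ℝ) * t₂ ^ (α.2-1)) * C) * (1 * 1) := by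
            refine mul_le_mul_right (mul_le_mul' ?_ ?_) _
            · simpa using ENNReal.ofReal_le_one.mpr (by linarith)
            · simpa using ENNReal.ofReal_le_one.mpr (by linarith)
        _ = _ := by rw [mul_one, mul_one]
    refine ne_top_of_le_ne_top ?_ (ENNReal.tsum_le_tsum key)
    rw [← ENNReal.ofReal_tsum_of_nonneg (fun α => by positivity) hsum]
    exact ENNReal.ofReal_ne_top

lemma normE {H : Type*} [NormedAddCommGroup H] [NormedSpace ℂ H]
    (α : ℕ × ℕ) (θ : ℝ × ℝ) (v : H) :
    ‖Complex.exp (Complex.I * ((α.1 : ℂ) * (θ.1 : ℂ) + (α.2 : ℂ) * (θ.2 : ℂ))) • v‖ = ‖v‖ := by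
  have he : Complex.I * ((α.1 : ℂ) * (θ.1 : ℂ) + (α.2 : ℂ) * (θ.2 : ℂ))
      = Complex.I * (((α.1:ℝ) * θ.1 + (α.2:ℝ) * θ.2 : ℝ) : ℂ) := by push_cast; ring
  rw [norm_smul, he, normExpI, one_mul]

lemma decomp {H : Type*} [NormedAddCommGroup H] [NormedSpace ℂ H] [CompleteSpace H]
    (a : ℕ × ℕ → H) {C : ℝ} (hb : ∀ α, ‖a α‖ ≤ C) (θ : ℝ × ℝ) {t₁ t₂ : ℝ}
    (h10 : 0 ≤ t₁) (h11 : t₁ < 1) (h20 : 0 ≤ t₂) (h21 : t₂ < 1) :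
    abelMean2 a (t₁, t₂) θ =
      a (0, 0)
      + ∑' k : ℕ, (((t₁ ^ k - if k = 0 then 1 else 0 : ℝ)) : ℂ) •
          (Complex.exp (Complex.I * k * θ.1) • a (k, 0))
      + ∑' k : ℕ, (((t₂ ^ k - if k = 0 then 1 else 0 : ℝ)) : ℂ) •
          (Complex.exp (Complex.I * k * θ.2) • a (0, k))
      + ∑' α : ℕ × ℕ, ((((t₁ ^ α.1 - if α.1 = 0 then 1 else 0) *
          (t₂ ^ α.2 - if α.2 = 0 then 1 else 0) : ℝ)) : ℂ) •
        (Complex.exp (Complex.I * ((α.1 : ℂ) * (θ.1 : ℂ) + (α.2 : ℂ) * (θ.2 : ℂ))) • a α) := by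
  have hC : 0 ≤ C := le_trans (norm_nonneg _) (hb 0)
  set E : ℕ × ℕ → H := fun α =>
    Complex.exp (Complex.I * ((α.1 : ℂ) * (θ.1 : ℂ) + (α.2 : ℂ) * (θ.2 : ℂ))) • a α with hE
  set P1 : ℕ → ℂ := fun k => (((t₁ ^ k - if k = 0 then 1 else 0 : ℝ)) : ℂ) with hP1
  set P2 : ℕ → ℂ := fun k => (((t₂ ^ k - if k = 0 then 1 else 0 : ℝ)) : ℂ) with hP2
  set d : ℕ → ℂ := fun k => if k = 0 then 1 else 0 with hd
  -- the summable real bound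
  have hgeom1 : Summable (fun k : ℕ => t₁ ^ k + (if k = 0 then (1:ℝ) else 0)) :=
    (summable_geometric_of_lt_one h10 h11).add
      (summable_of_ne_finset_zero (s := {0}) (fun k hk => by
        simp only [Finset.mem_singleton] at hk; simp [hk]))
  have hgeom2 : Summable (fun k : ℕ => t₂ ^ k + (if k = 0 then (1:ℝ) else 0)) :=
    (summable_geometric_of_lt_one h20 h21).add
      (summable_of_ne_finset_zero (s := {0}) (fun k hk => by
        simp only [Finset.mem_singleton] at hk; simp [hk]))
  have hB : Summable (fun α : ℕ × ℕ =>
      (t₁ ^ α.1 + (if α.1 = 0 then (1:ℝ) else 0)) *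
      (t₂ ^ α.2 + (if α.2 = 0 then (1:ℝ) else 0)) * C) :=
    (hgeom1.mul_of_nonneg hgeom2 (fun k => by positivity) (fun k => by positivity)).mul_right C
  -- bounds on the scalar factors
  have habs1 : ∀ k, ‖P1 k‖ ≤ t₁ ^ k + (if k = 0 then (1:ℝ) else 0) := by
    intro k
    rw [hP1]; simp only [Complex.norm_real, Real.norm_eq_abs]
    refine (abs_sub _ _).trans ?_
    gcongr
    · exact le_of_eq (_root_.abs_of_nonneg (by positivity))
    · split <;> simp
  have habs2 : ∀ k, ‖P2 k‖ ≤ t₂ ^ k + (if k = 0 then (1:ℝ) else 0) := by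
    intro k
    rw [hP2]; simp only [Complex.norm_real, Real.norm_eq_abs]
    refine (abs_sub _ _).trans ?_
    gcongr
    · exact le_of_eq (_root_.abs_of_nonneg (by positivity))
    · split <;> simp
  have habsd1 : ∀ k, ‖d k‖ ≤ t₁ ^ k + (if k = 0 then (1:ℝ) else 0) := by
    intro k; by_cases h : k = 0
    · simp [hd, h]
    · simp only [hd, h, if_false]
      simpa using pow_nonneg h10 k
  have habsd2 : ∀ k, ‖d k‖ ≤ t₂ ^ k + (if k = 0 then (1:ℝ) else 0) := by
    intro k; by_cases h : k = 0
    · simp [hd, h]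
    · simp only [hd, h, if_false]
      simpa using pow_nonneg h20 k
  have hEn : ∀ α, ‖E α‖ ≤ C := fun α => by rw [hE]; simpa [normE α θ (a α)] using hb α
  -- summability of the four vector families
  have hkey : ∀ (c1 c2 : ℕ → ℂ),
      (∀ k, ‖c1 k‖ ≤ t₁ ^ k + (if k = 0 then (1:ℝ) else 0)) →
      (∀ k, ‖c2 k‖ ≤ t₂ ^ k + (if k = 0 then (1:ℝ) else 0)) →
      Summable (fun α : ℕ × ℕ => (c1 α.1 * c2 α.2) • E α) := by
    intro c1 c2 hc1 hc2
    refine Summable.of_norm_bounded hB fun α => ?_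
    rw [norm_smul, norm_mul]
    have := mul_le_mul (mul_le_mul (hc1 α.1) (hc2 α.2) (norm_nonneg _)
      (by positivity)) (hEn α) (norm_nonneg _) (by positivity)
    exact this
  have hs11 := hkey d d habsd1 habsd2
  have hs21 := hkey P1 d habs1 habsd2
  have hs12 := hkey d P2 habsd1 habs2
  have hs22 := hkey P1 P2 habs1 habs2
  -- pointwise decomposition of the abel coefficient
  have hpt : ∀ α : ℕ × ℕ,
      (((t₁ : ℂ) ^ α.1 * (t₂ : ℂ) ^ α.2) *
        Complex.exp (Complex.I * ((α.1 : ℂ) * (θ.1 : ℂ) + (α.2 : ℂ) * (θ.2 : ℂ)))) • a α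
      = (d α.1 * d α.2) • E α + (P1 α.1 * d α.2) • E α
        + (d α.1 * P2 α.2) • E α + (P1 α.1 * P2 α.2) • E α := by
    intro α
    rw [hE]
    rw [mul_smul, ← add_smul, ← add_smul, ← add_smul]
    congr 1
    rw [hP1, hP2, hd]
    push_cast
    by_cases h1 : α.1 = 0 <;> by_cases h2 : α.2 = 0 <;> simp [h1, h2] <;> ring
  have hsplit : abelMean2 a (t₁, t₂) θ =
      (∑' α : ℕ × ℕ, (d α.1 * d α.2) • E α) + (∑' α : ℕ × ℕ, (P1 α.1 * d α.2) • E α)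
      + (∑' α : ℕ × ℕ, (d α.1 * P2 α.2) • E α) + (∑' α : ℕ × ℕ, (P1 α.1 * P2 α.2) • E α) := by
    unfold abelMean2
    simp only [hpt]
    rw [Summable.tsum_add (hs11.add hs21 |>.add hs12) hs22, Summable.tsum_add (hs11.add hs21) hs12,
      Summable.tsum_add hs11 hs21]
  rw [hsplit]
  congr 1
  · congr 1
    · congr 1
      · -- T1 = a (0,0)
        rw [tsum_eq_single (0, 0)]
        · simp [hd, hE]
        · intro α hα
          by_cases h1 : α.1 = 0
          · have h2 : α.2 ≠ 0 := fun h2 => hα (Prod.ext h1 h2)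
            simp [hd, h1, h2]
          · simp [hd, h1]
      · -- T2
        rw [← Function.Injective.tsum_eq (f := fun α : ℕ × ℕ => (P1 α.1 * d α.2) • E α)
            (g := fun k : ℕ => (k, 0))
            (fun x y hxy => by simpa using congrArg Prod.fst hxy) ?_]
        · refine tsum_congr fun k => ?_
          simp only [hd, if_pos rfl, mul_one, hE]
          congr 2
          push_cast; ring
        · refine Function.support_subset_iff.mpr fun α hα => ?_
          by_contra hc
          have h2 : α.2 ≠ 0 := fun h => hc ⟨α.1, Prod.ext rfl h.symm⟩
          exact hα (by simp [hd, h2])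
    · -- T3
      rw [← Function.Injective.tsum_eq (f := fun α : ℕ × ℕ => (d α.1 * P2 α.2) • E α)
          (g := fun k : ℕ => (0, k))
          (fun x y hxy => by simpa using congrArg Prod.snd hxy) ?_]
      · refine tsum_congr fun k => ?_
        simp only [hd, if_pos rfl, one_mul, hE]
        congr 2
        push_cast; ring
      · refine Function.support_subset_iff.mpr fun α hα => ?_
        by_contra hc
        have h1 : α.1 ≠ 0 := fun h => hc ⟨α.2, Prod.ext h.symm rfl⟩
        exact hα (by simp [hd, h1])
  · -- T4
    refine tsum_congr fun α => ?_
    rw [hP1, hP2, hE]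
    push_cast
    ring_nf

-- exhausting finsets of ℕ × ℕ
lemma exhaust : Tendsto (fun n : ℕ => Finset.range n ×ˢ Finset.range n) atTop atTop := by
  refine tendsto_atTop_finset_of_monotone (fun m n hmn => ?_) (fun α => ⟨max α.1 α.2 + 1, ?_⟩)
  · exact Finset.product_subset_product (Finset.range_subset_range.mpr hmn)
      (Finset.range_subset_range.mpr hmn)
  · simp only [Finset.mem_product, Finset.mem_range]
    omega

lemma icc_ae_ico2 :
    (Icc (0:ℝ) 1 ×ˢ Icc (0:ℝ) 1 : Set (ℝ × ℝ)) =ᵐ[volume] (Ico (0:ℝ) 1 ×ˢ Ico (0:ℝ) 1) := by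
  have hnull : volume ((Icc (0:ℝ) 1 ×ˢ Icc (0:ℝ) 1) \ (Ico (0:ℝ) 1 ×ˢ Ico (0:ℝ) 1)) = 0 := by
    have hsub : (Icc (0:ℝ) 1 ×ˢ Icc (0:ℝ) 1) \ (Ico (0:ℝ) 1 ×ˢ Ico (0:ℝ) 1) ⊆
        ({1} ×ˢ (univ : Set ℝ)) ∪ ((univ : Set ℝ) ×ˢ {1}) := by
      rintro ⟨x, y⟩ ⟨⟨hx, hy⟩, hn⟩
      simp only [mem_prod, mem_Ico, not_and_or, not_and, not_lt] at hn
      simp only [mem_union, mem_prod, mem_singleton_iff, mem_univ, and_true, true_and]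
      rcases hn with (h | h) | (h | h)
      · exact absurd hx.1 h
      · left; exact le_antisymm hx.2 h
      · exact absurd hy.1 h
      · right; exact le_antisymm hy.2 h
    refine measure_mono_null hsub ?_
    refine le_antisymm ?_ zero_le
    refine (measure_union_le _ _).trans ?_
    rw [Measure.volume_eq_prod, Measure.prod_prod, Measure.prod_prod]
    simp
  have hsub2 : volume ((Ico (0:ℝ) 1 ×ˢ Ico (0:ℝ) 1) \ (Icc (0:ℝ) 1 ×ˢ Icc (0:ℝ) 1)) = 0 := by
    have : (Ico (0:ℝ) 1 ×ˢ Ico (0:ℝ) 1) \ (Icc (0:ℝ) 1 ×ˢ Icc (0:ℝ) 1) = ∅ := by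
      refine diff_eq_empty.mpr ?_
      exact prod_mono Ico_subset_Icc_self Ico_subset_Icc_self
    rw [this]; simp
  rw [Filter.eventuallyEq_set]
  rw [ae_iff]
  refine measure_mono_null (fun z hz => ?_) (by
    refine le_antisymm ?_ zero_le
    calc volume _ ≤ volume (((Icc (0:ℝ) 1 ×ˢ Icc (0:ℝ) 1) \ (Ico (0:ℝ) 1 ×ˢ Ico (0:ℝ) 1)) ∪
          ((Ico (0:ℝ) 1 ×ˢ Ico (0:ℝ) 1) \ (Icc (0:ℝ) 1 ×ˢ Icc (0:ℝ) 1))) := le_rfl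
      _ ≤ _ := (measure_union_le _ _)
      _ = 0 := by rw [hnull, hsub2]; simp)
  simp only [mem_setOf_eq] at hz
  by_cases h1 : z ∈ Icc (0:ℝ) 1 ×ˢ Icc (0:ℝ) 1
  · exact mem_union_left _ ⟨h1, fun h2 => hz (iff_of_true h1 h2)⟩
  · exact mem_union_right _ ⟨by_contra fun h2 => hz (iff_of_false h1 h2), h1⟩

lemma summable1 {H : Type*} [NormedAddCommGroup H] [NormedSpace ℂ H] [CompleteSpace H]
    (b : ℕ → H) {C : ℝ} (hb : ∀ k, ‖b k‖ ≤ C) (φ : ℝ) {ρ : ℝ} (h0 : 0 ≤ ρ) (h1 : ρ < 1) :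
    Summable (fun k : ℕ => ((k:ℂ) * (ρ:ℂ) ^ (k-1) * Complex.exp (Complex.I * k * φ)) • b k) := by
  have hC : 0 ≤ C := le_trans (norm_nonneg _) (hb 0)
  refine Summable.of_norm_bounded ((sumDeriv h0 h1).mul_right C) fun k => ?_
  rw [norm_term1 k h0 φ (b k)]
  have : (0:ℝ) ≤ (k:ℝ) * ρ ^ (k-1) := by positivity
  exact mul_le_mul_of_nonneg_left (hb k) this

lemma summable2 {H : Type*} [NormedAddCommGroup H] [NormedSpace ℂ H] [CompleteSpace H]
    (a : ℕ × ℕ → H) {C : ℝ} (hb : ∀ α, ‖a α‖ ≤ C) (θ : ℝ × ℝ) {r : ℝ × ℝ}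
    (h10 : 0 ≤ r.1) (h11 : r.1 < 1) (h20 : 0 ≤ r.2) (h21 : r.2 < 1) :
    Summable (fun α : ℕ × ℕ => (((α.1 : ℂ) * (r.1 : ℂ) ^ (α.1 - 1)) *
      ((α.2 : ℂ) * (r.2 : ℂ) ^ (α.2 - 1)) *
      Complex.exp (Complex.I * ((α.1 : ℂ) * (θ.1 : ℂ) + (α.2 : ℂ) * (θ.2 : ℂ)))) • a α) := by
  have hC : 0 ≤ C := le_trans (norm_nonneg _) (hb 0)
  refine Summable.of_norm_bounded
    (((sumDeriv h10 h11).mul_of_nonneg (sumDeriv h20 h21)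
        (fun k => by positivity) (fun k => by positivity)).mul_right C) fun α => ?_
  rw [norm_term2 α h10 h20 θ (a α)]
  have : (0:ℝ) ≤ ((α.1:ℝ) * r.1 ^ (α.1-1)) * ((α.2:ℝ) * r.2 ^ (α.2-1)) := by
    have := pow_nonneg h10 (α.1 - 1); have := pow_nonneg h20 (α.2 - 1); positivity
  exact mul_le_mul_of_nonneg_left (hb α) this

lemma meas1 {H : Type*} [NormedAddCommGroup H] [NormedSpace ℂ H] [CompleteSpace H]
    (b : ℕ → H) {C : ℝ} (hb : ∀ k, ‖b k‖ ≤ C) (φ : ℝ) :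
    AEStronglyMeasurable (radialDeriv1 b φ) (volume.restrict (Icc (0:ℝ) 1)) := by
  rw [Measure.restrict_congr_set (Ico_ae_eq_Icc (μ := volume) (a := (0:ℝ)) (b := 1)).symm]
  have h1 : ∀ n : ℕ, AEStronglyMeasurable (fun ρ : ℝ => ∑ k ∈ Finset.range n,
      ((k:ℂ) * (ρ:ℂ) ^ (k-1) * Complex.exp (Complex.I * k * φ)) • b k)
      (volume.restrict (Ico (0:ℝ) 1)) := by
    intro n
    refine Continuous.aestronglyMeasurable ?_
    refine continuous_finset_sum _ fun k _ => ?_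
    fun_prop
  have h2 : ∀ᵐ (ρ : ℝ) ∂(volume.restrict (Ico (0:ℝ) 1)),
      Tendsto (fun n : ℕ => ∑ k ∈ Finset.range n,
        ((k:ℂ) * (ρ:ℂ) ^ (k-1) * Complex.exp (Complex.I * k * φ)) • b k) atTop
        (nhds (radialDeriv1 b φ ρ)) := by
    filter_upwards [ae_restrict_mem measurableSet_Ico] with ρ hρ
    exact ((summable1 b hb φ hρ.1 hρ.2).hasSum).tendsto_sum_nat
  exact aestronglyMeasurable_of_tendsto_ae atTop h1 h2

lemma meas2 {H : Type*} [NormedAddCommGroup H] [NormedSpace ℂ H] [CompleteSpace H]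
    (a : ℕ × ℕ → H) {C : ℝ} (hb : ∀ α, ‖a α‖ ≤ C) (θ : ℝ × ℝ) :
    AEStronglyMeasurable (radialDeriv2 a θ)
      (volume.restrict (Icc (0:ℝ) 1 ×ˢ Icc (0:ℝ) 1)) := by
  rw [Measure.restrict_congr_set icc_ae_ico2]
  have h1 : ∀ n : ℕ, AEStronglyMeasurable (fun r : ℝ × ℝ =>
      ∑ α ∈ Finset.range n ×ˢ Finset.range n,
      (((α.1 : ℂ) * (r.1 : ℂ) ^ (α.1 - 1)) * ((α.2 : ℂ) * (r.2 : ℂ) ^ (α.2 - 1)) *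
        Complex.exp (Complex.I * ((α.1 : ℂ) * (θ.1 : ℂ) + (α.2 : ℂ) * (θ.2 : ℂ)))) • a α)
      (volume.restrict (Ico (0:ℝ) 1 ×ˢ Ico (0:ℝ) 1)) := by
    intro n
    refine Continuous.aestronglyMeasurable ?_
    refine continuous_finset_sum _ fun α _ => ?_
    fun_prop
  have h2 : ∀ᵐ (r : ℝ × ℝ) ∂(volume.restrict (Ico (0:ℝ) 1 ×ˢ Ico (0:ℝ) 1)),
      Tendsto (fun n : ℕ => ∑ α ∈ Finset.range n ×ˢ Finset.range n,
      (((α.1 : ℂ) * (r.1 : ℂ) ^ (α.1 - 1)) * ((α.2 : ℂ) * (r.2 : ℂ) ^ (α.2 - 1)) *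
        Complex.exp (Complex.I * ((α.1 : ℂ) * (θ.1 : ℂ) + (α.2 : ℂ) * (θ.2 : ℂ)))) • a α) atTop
        (nhds (radialDeriv2 a θ r)) := by
    filter_upwards [ae_restrict_mem (measurableSet_Ico.prod measurableSet_Ico)] with r hr
    exact ((summable2 a hb θ hr.1.1 hr.1.2 hr.2.1 hr.2.2).hasSum).comp exhaust
  exact aestronglyMeasurable_of_tendsto_ae atTop h1 h2

lemma lim1 {H : Type*} [NormedAddCommGroup H] [NormedSpace ℝ H] [CompleteSpace H]
    (g : ℝ → H) (hg : Integrable g (volume.restrict (Icc (0:ℝ) 1))) :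
    Tendsto (fun t : ℝ => ∫ ρ in Ioc (0:ℝ) t, g ρ) (nhdsWithin 1 (Ico (0:ℝ) 1))
      (nhds (∫ ρ in Ioc (0:ℝ) 1, g ρ)) := by
  set μ0 := volume.restrict (Icc (0:ℝ) 1) with hμ0
  set l := nhdsWithin (1:ℝ) (Ico (0:ℝ) 1) with hl
  have hone : ∀ᵐ (ρ : ℝ) ∂μ0, ρ ≠ 1 := by
    rw [ae_iff]
    refine measure_mono_null (fun x hx => ?_) (?_ : μ0 {(1:ℝ)} = 0)
    · simpa using not_not.mp (by simpa using hx)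
    · rw [hμ0, Measure.restrict_apply (measurableSet_singleton _)]
      exact measure_mono_null (inter_subset_left) Real.volume_singleton
  have main : Tendsto (fun t : ℝ => ∫ ρ, (Ioc (0:ℝ) t).indicator g ρ ∂μ0) l
      (nhds (∫ ρ, (Ioc (0:ℝ) 1).indicator g ρ ∂μ0)) := by
    refine tendsto_integral_filter_of_dominated_convergence (fun ρ => ‖g ρ‖)
      (Eventually.of_forall fun t => hg.1.indicator measurableSet_Ioc)
      (Eventually.of_forall fun t => ae_of_all _ fun ρ => norm_indicator_le_norm_self g ρ)
      hg.norm ?_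
    filter_upwards [hone] with ρ hρ
    by_cases hmem : ρ ∈ Ioc (0:ℝ) 1
    · have hρ1 : ρ < 1 := lt_of_le_of_ne hmem.2 hρ
      have hev : ∀ᶠ t in l, (Ioc (0:ℝ) t).indicator g ρ = (Ioc (0:ℝ) 1).indicator g ρ := by
        filter_upwards [nhdsWithin_le_nhds (Ioi_mem_nhds hρ1)] with t ht
        rw [indicator_of_mem (show ρ ∈ Ioc (0:ℝ) t from ⟨hmem.1, le_of_lt ht⟩) g,
          indicator_of_mem hmem g]
      exact Tendsto.congr' (EventuallyEq.symm hev) tendsto_const_nhds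
    · rw [indicator_of_notMem hmem]
      have hev : ∀ᶠ t in l, (Ioc (0:ℝ) t).indicator g ρ = 0 := by
        filter_upwards [eventually_mem_nhdsWithin] with t ht
        refine indicator_of_notMem (fun hin => hmem ⟨hin.1, hin.2.trans (le_of_lt ht.2)⟩) g
      exact Tendsto.congr' (EventuallyEq.symm hev) tendsto_const_nhds
  have hconv : ∀ t : ℝ, 0 ≤ t → t ≤ 1 →
      (∫ ρ, (Ioc (0:ℝ) t).indicator g ρ ∂μ0) = ∫ ρ in Ioc (0:ℝ) t, g ρ := by
    intro t h0 h1
    rw [integral_indicator measurableSet_Ioc, hμ0, Measure.restrict_restrict measurableSet_Ioc,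
      inter_eq_left.mpr (show Ioc (0:ℝ) t ⊆ Icc (0:ℝ) 1 from
        fun x hx => ⟨le_of_lt hx.1, hx.2.trans h1⟩)]
  rw [← hconv 1 zero_le_one le_rfl]
  refine Tendsto.congr' ?_ main
  filter_upwards [eventually_mem_nhdsWithin] with t ht
  exact hconv t ht.1 (le_of_lt ht.2)

lemma lim2 {H : Type*} [NormedAddCommGroup H] [NormedSpace ℝ H] [CompleteSpace H]
    (g : ℝ × ℝ → H) (hg : Integrable g (volume.restrict (Icc (0:ℝ) 1 ×ˢ Icc (0:ℝ) 1))) :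
    Tendsto (fun r : ℝ × ℝ => ∫ ρ in Ioc (0:ℝ) r.1 ×ˢ Ioc (0:ℝ) r.2, g ρ)
      (nhdsWithin (1, 1) (Ico (0:ℝ) 1 ×ˢ Ico (0:ℝ) 1))
      (nhds (∫ ρ in Ioc (0:ℝ) 1 ×ˢ Ioc (0:ℝ) 1, g ρ)) := by
  set μ0 := volume.restrict (Icc (0:ℝ) 1 ×ˢ Icc (0:ℝ) 1) with hμ0
  set l := nhdsWithin ((1:ℝ), (1:ℝ)) (Ico (0:ℝ) 1 ×ˢ Ico (0:ℝ) 1) with hl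
  have hone : ∀ᵐ (ρ : ℝ × ℝ) ∂μ0, ρ.1 ≠ 1 ∧ ρ.2 ≠ 1 := by
    rw [ae_iff]
    have hsub : {x : ℝ × ℝ | ¬(x.1 ≠ 1 ∧ x.2 ≠ 1)} ⊆
        ({1} ×ˢ (univ : Set ℝ)) ∪ ((univ : Set ℝ) ×ˢ {1}) := by
      rintro ⟨x, y⟩ hx
      simp only [mem_setOf_eq, not_and_or, not_not] at hx
      rcases hx with h | h
      · exact mem_union_left _ ⟨h, mem_univ _⟩
      · exact mem_union_right _ ⟨mem_univ _, h⟩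
    refine measure_mono_null hsub ?_
    refine le_antisymm (le_trans (Measure.le_iff'.mp Measure.restrict_le_self _) ?_) zero_le
    refine le_trans (measure_union_le _ _) ?_
    rw [Measure.volume_eq_prod, Measure.prod_prod, Measure.prod_prod]
    simp
  have main : Tendsto (fun r : ℝ × ℝ => ∫ ρ, (Ioc (0:ℝ) r.1 ×ˢ Ioc (0:ℝ) r.2).indicator g ρ ∂μ0) l
      (nhds (∫ ρ, (Ioc (0:ℝ) 1 ×ˢ Ioc (0:ℝ) 1).indicator g ρ ∂μ0)) := by
    refine tendsto_integral_filter_of_dominated_convergence (fun ρ => ‖g ρ‖)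
      (Eventually.of_forall fun r => hg.1.indicator (measurableSet_Ioc.prod measurableSet_Ioc))
      (Eventually.of_forall fun r => ae_of_all _ fun ρ => norm_indicator_le_norm_self g ρ)
      hg.norm ?_
    filter_upwards [hone] with ρ hρ
    by_cases hmem : ρ ∈ Ioc (0:ℝ) 1 ×ˢ Ioc (0:ℝ) 1
    · have hρ1 : ρ.1 < 1 := lt_of_le_of_ne hmem.1.2 hρ.1
      have hρ2 : ρ.2 < 1 := lt_of_le_of_ne hmem.2.2 hρ.2
      have hev : ∀ᶠ r in l, (Ioc (0:ℝ) r.1 ×ˢ Ioc (0:ℝ) r.2).indicator g ρ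
          = (Ioc (0:ℝ) 1 ×ˢ Ioc (0:ℝ) 1).indicator g ρ := by
        have hn : (Ioi ρ.1 ×ˢ Ioi ρ.2 : Set (ℝ × ℝ)) ∈ nhds ((1:ℝ), (1:ℝ)) :=
          prod_mem_nhds (Ioi_mem_nhds hρ1) (Ioi_mem_nhds hρ2)
        filter_upwards [nhdsWithin_le_nhds hn] with r hr
        rw [indicator_of_mem (show ρ ∈ Ioc (0:ℝ) r.1 ×ˢ Ioc (0:ℝ) r.2 from
            ⟨⟨hmem.1.1, le_of_lt hr.1⟩, ⟨hmem.2.1, le_of_lt hr.2⟩⟩) g,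
          indicator_of_mem hmem g]
      exact Tendsto.congr' (EventuallyEq.symm hev) tendsto_const_nhds
    · rw [indicator_of_notMem hmem]
      have hev : ∀ᶠ r in l, (Ioc (0:ℝ) r.1 ×ˢ Ioc (0:ℝ) r.2).indicator g ρ = 0 := by
        filter_upwards [eventually_mem_nhdsWithin] with r hr
        refine indicator_of_notMem (fun hin => hmem
          ⟨⟨hin.1.1, hin.1.2.trans (le_of_lt hr.1.2)⟩,
           ⟨hin.2.1, hin.2.2.trans (le_of_lt hr.2.2)⟩⟩) g
      exact Tendsto.congr' (EventuallyEq.symm hev) tendsto_const_nhds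
  have hconv : ∀ r : ℝ × ℝ, 0 ≤ r.1 → r.1 ≤ 1 → 0 ≤ r.2 → r.2 ≤ 1 →
      (∫ ρ, (Ioc (0:ℝ) r.1 ×ˢ Ioc (0:ℝ) r.2).indicator g ρ ∂μ0)
        = ∫ ρ in Ioc (0:ℝ) r.1 ×ˢ Ioc (0:ℝ) r.2, g ρ := by
    intro r h10 h11 h20 h21
    rw [integral_indicator (measurableSet_Ioc.prod measurableSet_Ioc), hμ0,
      Measure.restrict_restrict (measurableSet_Ioc.prod measurableSet_Ioc),
      inter_eq_left.mpr (prod_mono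
        (show Ioc (0:ℝ) r.1 ⊆ Icc (0:ℝ) 1 from fun x hx => ⟨le_of_lt hx.1, hx.2.trans h11⟩)
        (show Ioc (0:ℝ) r.2 ⊆ Icc (0:ℝ) 1 from fun x hx => ⟨le_of_lt hx.1, hx.2.trans h21⟩))]
  rw [show (∫ ρ in Ioc (0:ℝ) 1 ×ˢ Ioc (0:ℝ) 1, g ρ)
      = ∫ ρ, (Ioc (0:ℝ) 1 ×ˢ Ioc (0:ℝ) 1).indicator g ρ ∂μ0 from
    (hconv (1,1) zero_le_one le_rfl zero_le_one le_rfl).symm]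
  refine Tendsto.congr' ?_ main
  filter_upwards [eventually_mem_nhdsWithin] with r hr
  exact hconv r hr.1.1 (le_of_lt hr.1.2) hr.2.1 (le_of_lt hr.2.2)

/-- **Lemma (finite radial variation implies radial limits, `n = 2`).** If `f ∈ 𝒟(𝔻², H)`
and the radial variations `V₂f(θ)`, `V₁f¹(θ₁)`, `V₁f²(θ₂)` of `f` and its slice functions
`f¹(z) = f(z,0)`, `f²(w) = f(0,w)` are finite, then `lim_{r→(1,1)} f_r(θ)` exists and
`sup_r ‖f_r(θ)‖ < ∞`. -/
theorem radial_limit_of_finite_variation (H : Type*) [NormedAddCommGroup H]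
    [InnerProductSpace ℂ H] [CompleteSpace H]
    (a : ℕ × ℕ → H)
    (hf : Summable fun α : ℕ × ℕ => ((α.1 : ℝ) + 1) * ((α.2 : ℝ) + 1) * ‖a α‖ ^ 2)
    (θ : ℝ × ℝ) (hθ₁ : θ.1 ∈ Set.Ico 0 (2 * Real.pi)) (hθ₂ : θ.2 ∈ Set.Ico 0 (2 * Real.pi))
    (hV2 : (∫⁻ r in Set.Icc (0 : ℝ) 1 ×ˢ Set.Icc (0 : ℝ) 1,
      ENNReal.ofReal ‖radialDeriv2 a θ r‖) < ⊤)
    (hV1 : (∫⁻ ρ in Set.Icc (0 : ℝ) 1,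
      ENNReal.ofReal ‖radialDeriv1 (fun k => a (k, 0)) θ.1 ρ‖) < ⊤)
    (hV1' : (∫⁻ ρ in Set.Icc (0 : ℝ) 1,
      ENNReal.ofReal ‖radialDeriv1 (fun k => a (0, k)) θ.2 ρ‖) < ⊤) :
    (∃ L : H, Filter.Tendsto (fun r : ℝ × ℝ => abelMean2 a r θ)
      (nhdsWithin (1, 1) (Set.Ico (0 : ℝ) 1 ×ˢ Set.Ico (0 : ℝ) 1)) (nhds L)) ∧
    ∃ M : ℝ, ∀ r ∈ Set.Ico (0 : ℝ) 1 ×ˢ Set.Ico (0 : ℝ) 1, ‖abelMean2 a r θ‖ ≤ M := by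
  classical
  -- uniform bound on the coefficients
  have hb : ∀ α : ℕ × ℕ, ‖a α‖ ≤
      Real.sqrt (∑' α : ℕ × ℕ, ((α.1 : ℝ) + 1) * ((α.2 : ℝ) + 1) * ‖a α‖ ^ 2) := by
    intro α
    have h2 : (1:ℝ) ≤ ((α.1 : ℝ) + 1) * ((α.2 : ℝ) + 1) := by
      have c1 : (0:ℝ) ≤ (α.1:ℝ) := Nat.cast_nonneg _
      have c2 : (0:ℝ) ≤ (α.2:ℝ) := Nat.cast_nonneg _
      nlinarith
    have h1 : ‖a α‖ ^ 2 ≤ ((α.1 : ℝ) + 1) * ((α.2 : ℝ) + 1) * ‖a α‖ ^ 2 := by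
      nlinarith [sq_nonneg ‖a α‖]
    have h3 : ((α.1 : ℝ) + 1) * ((α.2 : ℝ) + 1) * ‖a α‖ ^ 2 ≤
        ∑' α : ℕ × ℕ, ((α.1 : ℝ) + 1) * ((α.2 : ℝ) + 1) * ‖a α‖ ^ 2 :=
      Summable.le_tsum hf α fun β _ => by positivity
    calc ‖a α‖ = Real.sqrt (‖a α‖ ^ 2) := (Real.sqrt_sq (norm_nonneg _)).symm
      _ ≤ _ := Real.sqrt_le_sqrt (h1.trans h3)
  have hb1 : ∀ k : ℕ, ‖a (k, 0)‖ ≤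
      Real.sqrt (∑' α : ℕ × ℕ, ((α.1 : ℝ) + 1) * ((α.2 : ℝ) + 1) * ‖a α‖ ^ 2) :=
    fun k => hb (k, 0)
  have hb2 : ∀ k : ℕ, ‖a (0, k)‖ ≤
      Real.sqrt (∑' α : ℕ × ℕ, ((α.1 : ℝ) + 1) * ((α.2 : ℝ) + 1) * ‖a α‖ ^ 2) :=
    fun k => hb (0, k)
  -- integrability of the radial derivatives
  have hint1 : Integrable (radialDeriv1 (fun k => a (k, 0)) θ.1)
      (volume.restrict (Icc (0:ℝ) 1)) :=
    ⟨meas1 _ hb1 _, (hasFiniteIntegral_iff_norm _).mpr hV1⟩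
  have hint2 : Integrable (radialDeriv1 (fun k => a (0, k)) θ.2)
      (volume.restrict (Icc (0:ℝ) 1)) :=
    ⟨meas1 _ hb2 _, (hasFiniteIntegral_iff_norm _).mpr hV1'⟩
  have hint12 : Integrable (radialDeriv2 a θ)
      (volume.restrict (Icc (0:ℝ) 1 ×ˢ Icc (0:ℝ) 1)) :=
    ⟨meas2 _ hb _, (hasFiniteIntegral_iff_norm _).mpr hV2⟩
  -- the FTC representation of the Abel mean
  have habel : ∀ r : ℝ × ℝ, r ∈ Set.Ico (0 : ℝ) 1 ×ˢ Set.Ico (0 : ℝ) 1 →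
      abelMean2 a r θ = a (0, 0)
        + (∫ ρ in Ioc (0:ℝ) r.1, radialDeriv1 (fun k => a (k, 0)) θ.1 ρ)
        + (∫ ρ in Ioc (0:ℝ) r.2, radialDeriv1 (fun k => a (0, k)) θ.2 ρ)
        + ∫ ρ in Ioc (0:ℝ) r.1 ×ˢ Ioc (0:ℝ) r.2, radialDeriv2 a θ ρ := by
    intro r hr
    have hd := decomp a hb θ hr.1.1 hr.1.2 hr.2.1 hr.2.2
    rw [show ((r.1, r.2) : ℝ × ℝ) = r from rfl] at hd
    rw [hd, ftc1 (fun k => a (k, 0)) hb1 θ.1 hr.1.1 hr.1.2,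
      ftc1 (fun k => a (0, k)) hb2 θ.2 hr.2.1 hr.2.2,
      ftc2 a hb θ hr.1.1 hr.1.2 hr.2.1 hr.2.2]
  have hfst : Tendsto (fun r : ℝ × ℝ => r.1)
      (nhdsWithin ((1:ℝ), (1:ℝ)) (Set.Ico (0 : ℝ) 1 ×ˢ Set.Ico (0 : ℝ) 1))
      (nhdsWithin 1 (Ico (0:ℝ) 1)) := by
    rw [nhdsWithin_prod_eq]; exact tendsto_fst
  have hsnd : Tendsto (fun r : ℝ × ℝ => r.2)
      (nhdsWithin ((1:ℝ), (1:ℝ)) (Set.Ico (0 : ℝ) 1 ×ˢ Set.Ico (0 : ℝ) 1))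
      (nhdsWithin 1 (Ico (0:ℝ) 1)) := by
    rw [nhdsWithin_prod_eq]; exact tendsto_snd
  have t1 : Tendsto (fun r : ℝ × ℝ => ∫ ρ in Ioc (0:ℝ) r.1,
      radialDeriv1 (fun k => a (k, 0)) θ.1 ρ)
      (nhdsWithin (1, 1) (Set.Ico (0 : ℝ) 1 ×ˢ Set.Ico (0 : ℝ) 1))
      (nhds (∫ ρ in Ioc (0:ℝ) 1, radialDeriv1 (fun k => a (k, 0)) θ.1 ρ)) :=
    (lim1 _ hint1).comp hfst
  have t2 : Tendsto (fun r : ℝ × ℝ => ∫ ρ in Ioc (0:ℝ) r.2,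
      radialDeriv1 (fun k => a (0, k)) θ.2 ρ)
      (nhdsWithin (1, 1) (Set.Ico (0 : ℝ) 1 ×ˢ Set.Ico (0 : ℝ) 1))
      (nhds (∫ ρ in Ioc (0:ℝ) 1, radialDeriv1 (fun k => a (0, k)) θ.2 ρ)) :=
    (lim1 _ hint2).comp hsnd
  have t12 := lim2 (radialDeriv2 a θ) hint12
  constructor
  · refine ⟨a (0, 0) + (∫ ρ in Ioc (0:ℝ) 1, radialDeriv1 (fun k => a (k, 0)) θ.1 ρ)
      + (∫ ρ in Ioc (0:ℝ) 1, radialDeriv1 (fun k => a (0, k)) θ.2 ρ)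
      + ∫ ρ in Ioc (0:ℝ) 1 ×ˢ Ioc (0:ℝ) 1, radialDeriv2 a θ ρ, ?_⟩
    refine Tendsto.congr' ?_ (((tendsto_const_nhds.add t1).add t2).add t12)
    filter_upwards [eventually_mem_nhdsWithin] with r hr
    exact (habel r hr).symm
  · refine ⟨‖a (0, 0)‖
      + (∫ ρ in Icc (0:ℝ) 1, ‖radialDeriv1 (fun k => a (k, 0)) θ.1 ρ‖)
      + (∫ ρ in Icc (0:ℝ) 1, ‖radialDeriv1 (fun k => a (0, k)) θ.2 ρ‖)
      + ∫ ρ in Icc (0:ℝ) 1 ×ˢ Icc (0:ℝ) 1, ‖radialDeriv2 a θ ρ‖, fun r hr => ?_⟩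
    rw [habel r hr]
    have e1 : ‖∫ ρ in Ioc (0:ℝ) r.1, radialDeriv1 (fun k => a (k, 0)) θ.1 ρ‖
        ≤ ∫ ρ in Icc (0:ℝ) 1, ‖radialDeriv1 (fun k => a (k, 0)) θ.1 ρ‖ := by
      refine (norm_integral_le_integral_norm _).trans ?_
      refine setIntegral_mono_set hint1.norm (ae_of_all _ fun ρ => norm_nonneg _) ?_
      exact HasSubset.Subset.eventuallyLE
        (fun x hx => ⟨le_of_lt hx.1, hx.2.trans (le_of_lt hr.1.2)⟩)
    have e2 : ‖∫ ρ in Ioc (0:ℝ) r.2, radialDeriv1 (fun k => a (0, k)) θ.2 ρ‖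
        ≤ ∫ ρ in Icc (0:ℝ) 1, ‖radialDeriv1 (fun k => a (0, k)) θ.2 ρ‖ := by
      refine (norm_integral_le_integral_norm _).trans ?_
      refine setIntegral_mono_set hint2.norm (ae_of_all _ fun ρ => norm_nonneg _) ?_
      exact HasSubset.Subset.eventuallyLE
        (fun x hx => ⟨le_of_lt hx.1, hx.2.trans (le_of_lt hr.2.2)⟩)
    have e12 : ‖∫ ρ in Ioc (0:ℝ) r.1 ×ˢ Ioc (0:ℝ) r.2, radialDeriv2 a θ ρ‖
        ≤ ∫ ρ in Icc (0:ℝ) 1 ×ˢ Icc (0:ℝ) 1, ‖radialDeriv2 a θ ρ‖ := by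
      refine (norm_integral_le_integral_norm _).trans ?_
      refine setIntegral_mono_set hint12.norm (ae_of_all _ fun ρ => norm_nonneg _) ?_
      refine HasSubset.Subset.eventuallyLE (prod_mono ?_ ?_)
      · exact fun x hx => ⟨le_of_lt hx.1, hx.2.trans (le_of_lt hr.1.2)⟩
      · exact fun x hx => ⟨le_of_lt hx.1, hx.2.trans (le_of_lt hr.2.2)⟩
    calc ‖_ + _ + _ + _‖ ≤ ‖_ + _ + _‖ + ‖_‖ := norm_add_le _ _
      _ ≤ (‖_ + _‖ + ‖_‖) + ‖_‖ := by gcongr; exact norm_add_le _ _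
      _ ≤ ((‖a (0,0)‖ + ‖_‖) + ‖_‖) + ‖_‖ := by gcongr; exact norm_add_le _ _
      _ ≤ _ := add_le_add (add_le_add (add_le_add le_rfl e1) e2) e12
end
end

section
/- Let n ≥ 1 and let h(θ) = 9 + (1/2) log(1/|1−e^{iθ}|), H(θ) = h(θ₁)⋯h(θ_n) for θ ∈ ((0,2π))ⁿ. Then there exist constants C > 0 and c₁, c₂ > 0 (depending only on n) such that for all ψ ∈ ((0,2π))ⁿ, c₁ H(ψ) ≤ Re ∏_{j=1}^n (C + log(1/(1−e^{−iψ_j}))) ≤ c₂ H(ψ), where log denotes the principal branch of the complex logarithm on the right half-plane; in particular the real part is nonnegative on ((0,2π))ⁿ. -/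
open MeasureTheory Filter Complex Set

noncomputable section

/-- The one-variable logarithmic kernel `h(θ) = 9 + (1/2) log(1/|1−e^{iθ}|)`. -/
def hKernel (θ : ℝ) : ℝ :=
  9 + (1 / 2) * Real.log (1 / ‖1 - Complex.exp (θ * Complex.I)‖)

set_option maxHeartbeats 800000 in
lemma aux_prod {ι : Type*} (t : ℝ) (ht : 0 ≤ t) (s : Finset ι) (z : ι → ℂ)
    (h1 : ∀ j ∈ s, 0 < (z j).re) (h2 : ∀ j ∈ s, |(z j).im| ≤ t * (z j).re)
    (h3 : (s.card : ℝ) * (2 * t) ≤ 1 / 2) :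
    (7/8 : ℝ) ^ s.card * ∏ j ∈ s, (z j).re ≤ (∏ j ∈ s, z j).re ∧
    (∏ j ∈ s, z j).re ≤ (9/8 : ℝ) ^ s.card * ∏ j ∈ s, (z j).re ∧
    |(∏ j ∈ s, z j).im| ≤ (2 * s.card * t) * (∏ j ∈ s, z j).re := by
  induction s using Finset.cons_induction with
  | empty => simp
  | cons a s ha ih =>
    have hk : (0:ℝ) ≤ s.card := by positivity
    have hcard : ((Finset.cons a s ha).card : ℝ) = s.card + 1 := by
      rw [Finset.card_cons]; push_cast; ring
    rw [hcard] at h3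
    have ht4 : t ≤ 1/4 := by nlinarith
    have h3' : (s.card : ℝ) * (2 * t) ≤ 1 / 2 := by nlinarith
    obtain ⟨L, U, Ib⟩ := ih (fun j hj => h1 j (Finset.mem_cons_of_mem hj))
      (fun j hj => h2 j (Finset.mem_cons_of_mem hj)) h3'
    have h1' : ∀ j ∈ s, 0 < (z j).re := fun j hj => h1 j (Finset.mem_cons_of_mem hj)
    have hRz : 0 < ∏ j ∈ s, (z j).re := Finset.prod_pos h1'
    have hwre : 0 < (z a).re := h1 a (Finset.mem_cons_self a s)
    have hwim : |(z a).im| ≤ t * (z a).re := h2 a (Finset.mem_cons_self a s)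
    set R := (∏ j ∈ s, z j).re with hR
    set I := (∏ j ∈ s, z j).im with hI
    set ε := 2 * (s.card : ℝ) * t with hε
    have hεnn : 0 ≤ ε := by positivity
    have hε2 : ε + 2*t ≤ 1/2 := by rw [hε]; nlinarith
    have hεle : ε ≤ 1/2 := by linarith
    have hRpos : 0 < R := lt_of_lt_of_le (by positivity) L
    have hwR : 0 < (z a).re * R := mul_pos hwre hRpos
    rw [Finset.prod_cons, Finset.prod_cons, Finset.card_cons]
    rw [Complex.mul_re, Complex.mul_im]
    have hIabs : |I| ≤ ε * R := Ib
    have habs1 : |(z a).im * I| ≤ (t * (z a).re) * (ε * R) := by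
      rw [abs_mul]; exact mul_le_mul hwim hIabs (abs_nonneg _) (by positivity)
    have hIle : (z a).im * I ≤ (t * (z a).re) * (ε * R) := le_trans (le_abs_self _) habs1
    have hIge : -((t * (z a).re) * (ε * R)) ≤ (z a).im * I := neg_le_of_abs_le habs1
    have htε : t * ε ≤ 1/8 := by nlinarith
    have hprod8 : t * (z a).re * (ε * R) ≤ (1/8) * ((z a).re * R) := by
      nlinarith [mul_le_mul_of_nonneg_right htε hwR.le]
    have hlow : (7/8 : ℝ) * ((z a).re * R) ≤ (z a).re * R - (z a).im * I := by nlinarith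
    have hup : (z a).re * R - (z a).im * I ≤ (9/8 : ℝ) * ((z a).re * R) := by nlinarith
    refine ⟨?_, ?_, ?_⟩
    · calc (7/8 : ℝ) ^ (s.card + 1) * ((z a).re * ∏ j ∈ s, (z j).re)
          = (7/8 : ℝ) * ((z a).re * ((7/8:ℝ)^s.card * ∏ j ∈ s, (z j).re)) := by ring
        _ ≤ (7/8 : ℝ) * ((z a).re * R) := by
            nlinarith [mul_le_mul_of_nonneg_left L hwre.le, pow_pos (show (0:ℝ) < 7/8 by norm_num) s.card]
        _ ≤ _ := hlow
    · calc (z a).re * R - (z a).im * I ≤ (9/8 : ℝ) * ((z a).re * R) := hup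
        _ ≤ (9/8 : ℝ) ^ (s.card + 1) * ((z a).re * ∏ j ∈ s, (z j).re) := by
            rw [pow_succ]
            nlinarith [mul_le_mul_of_nonneg_left U hwre.le, pow_pos (show (0:ℝ) < 9/8 by norm_num) s.card]
    · have him : |(z a).re * I + (z a).im * R| ≤ (z a).re * R * (ε + t) := by
        calc |(z a).re * I + (z a).im * R| ≤ |(z a).re * I| + |(z a).im * R| := abs_add_le _ _
          _ ≤ (z a).re * (ε * R) + (t * (z a).re) * R := by
              rw [abs_mul, abs_mul, abs_of_pos hwre, abs_of_pos hRpos]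
              gcongr
          _ = (z a).re * R * (ε + t) := by ring
      have hq : ε * (ε + 2*t) ≤ 1/4 := by nlinarith
      have h1a : ε + t ≤ (ε + 2*t) * (1 - t*ε) := by nlinarith [mul_le_mul_of_nonneg_left hq ht]
      have key : (z a).re * R * (ε + t) ≤ (ε + 2*t) * ((z a).re * R - (z a).im * I) := by
        have step1 : (z a).re * R * (ε + t) ≤ (z a).re * R * ((ε + 2*t) * (1 - t*ε)) :=
          mul_le_mul_of_nonneg_left h1a hwR.le
        have step2 : (z a).re * R * ((ε + 2*t) * (1 - t*ε)) ≤ (ε + 2*t) * ((z a).re * R - (z a).im * I) := by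
          have hnn : (0:ℝ) ≤ ε + 2*t := by positivity
          have : (z a).re * R * (1 - t*ε) ≤ (z a).re * R - (z a).im * I := by nlinarith
          nlinarith [mul_le_mul_of_nonneg_left this hnn]
        linarith
      calc |(z a).re * I + (z a).im * R| ≤ (z a).re * R * (ε + t) := him
        _ ≤ (ε + 2*t) * ((z a).re * R - (z a).im * I) := key
        _ = (2 * ((s.card + 1 : ℕ):ℝ) * t) * ((z a).re * R - (z a).im * I) := by
            rw [hε]; push_cast; ring



lemma point_facts (θ : ℝ) (hθ1 : 0 < θ) (hθ2 : θ < 2 * Real.pi) :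
    0 < (1 - Complex.exp (-(θ * Complex.I))).re ∧
    (Complex.log (1 / (1 - Complex.exp (-(θ * Complex.I))))).re = 2 * hKernel θ - 18 ∧
    |(Complex.log (1 / (1 - Complex.exp (-(θ * Complex.I))))).im| ≤ Real.pi / 2 ∧
    8 ≤ hKernel θ := by
  have hcos : Real.cos θ < 1 := by
    rcases lt_or_eq_of_le (Real.cos_le_one θ) with h | h
    · exact h
    · exfalso
      have := (Real.cos_eq_one_iff_of_lt_of_lt (by linarith [Real.two_pi_pos] : -(2*Real.pi) < θ) hθ2).mp h
      linarith
  have hneg : -((θ:ℂ) * Complex.I) = ((-θ : ℝ) : ℂ) * Complex.I := by push_cast; ring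
  have hre : (1 - Complex.exp (-(θ * Complex.I))).re = 1 - Real.cos θ := by
    rw [hneg, Complex.sub_re, Complex.one_re, Complex.exp_ofReal_mul_I_re, Real.cos_neg]
  have hure : 0 < (1 - Complex.exp (-(θ * Complex.I))).re := by rw [hre]; linarith
  have hre' : (1 - Complex.exp ((θ:ℂ) * Complex.I)).re = 1 - Real.cos θ := by
    rw [Complex.sub_re, Complex.one_re, Complex.exp_ofReal_mul_I_re]
  have hv0 : (1 - Complex.exp ((θ:ℂ) * Complex.I)) ≠ 0 := by
    intro h
    rw [h] at hre'
    simp at hre'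
    linarith
  have hrpos : 0 < ‖1 - Complex.exp ((θ:ℂ) * Complex.I)‖ := norm_pos_iff.mpr hv0
  have hrle : ‖1 - Complex.exp ((θ:ℂ) * Complex.I)‖ ≤ 2 := by
    calc ‖1 - Complex.exp ((θ:ℂ) * Complex.I)‖ ≤ ‖(1:ℂ)‖ + ‖Complex.exp ((θ:ℂ) * Complex.I)‖ :=
          norm_sub_le _ _
      _ = 2 := by
          rw [Complex.norm_exp_ofReal_mul_I]
          norm_num
  have hconj : (starRingEnd ℂ) (1 - Complex.exp ((θ:ℂ) * Complex.I)) =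
      1 - Complex.exp (-(θ * Complex.I)) := by
    rw [map_sub, map_one, ← Complex.exp_conj]
    congr 2
    simp [Complex.conj_I]
  have hnormeq : ‖1 - Complex.exp (-((θ:ℂ) * Complex.I))‖ = ‖1 - Complex.exp ((θ:ℂ) * Complex.I)‖ := by
    rw [← hconj, RCLike.norm_conj]
  set r := ‖1 - Complex.exp ((θ:ℂ) * Complex.I)‖ with hrdef
  have hlogr : Real.log r ≤ 1 := by
    calc Real.log r ≤ Real.log 2 := Real.log_le_log hrpos hrle
      _ ≤ 2 - 1 := Real.log_le_sub_one_of_pos (by norm_num)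
      _ = 1 := by norm_num
  have hker : hKernel θ = 9 - (1/2) * Real.log r := by
    simp only [hKernel]
    rw [Real.log_div one_ne_zero (ne_of_gt hrpos), Real.log_one]
    ring
  have hker8 : 8 ≤ hKernel θ := by rw [hker]; linarith
  refine ⟨hure, ?_, ?_, hker8⟩
  · rw [Complex.log_re, norm_div, norm_one]
    rw [Real.log_div (by norm_num) ?hne]
    · rw [Real.log_one, hnormeq, hker]; ring
    · case hne =>
        rw [hnormeq]
        exact ne_of_gt hrpos
  · rw [Complex.log_im]
    rw [Complex.abs_arg_le_pi_div_two_iff, one_div, Complex.inv_re]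
    exact div_nonneg hure.le (Complex.normSq_nonneg _)

/-- **Lemma (comparison of the holomorphic kernel with the `n`-logarithmic kernel).**
For `H(θ) = h(θ₁)⋯h(θ_n)`, there exist `C, c₁, c₂ > 0` (depending only on `n`) with
`c₁ H(ψ) ≤ Re ∏_j (C + log(1/(1−e^{−iψ_j}))) ≤ c₂ H(ψ)` for all `ψ ∈ (0,2π)ⁿ`;
in particular the real part is nonnegative. -/
theorem holomorphic_kernel_comparable (n : ℕ) (hn : 1 ≤ n) :
    ∃ C c₁ c₂ : ℝ, 0 < C ∧ 0 < c₁ ∧ 0 < c₂ ∧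
      ∀ ψ : Fin n → ℝ, (∀ j, ψ j ∈ Set.Ioo (0 : ℝ) (2 * Real.pi)) →
        c₁ * ∏ j, hKernel (ψ j) ≤
          (∏ j, ((C : ℂ) + Complex.log (1 / (1 - Complex.exp (-(ψ j * Complex.I)))))).re ∧
        (∏ j, ((C : ℂ) + Complex.log (1 / (1 - Complex.exp (-(ψ j * Complex.I)))))).re ≤
          c₂ * ∏ j, hKernel (ψ j) ∧
        0 ≤ (∏ j, ((C : ℂ) + Complex.log (1 / (1 - Complex.exp (-(ψ j * Complex.I)))))).re := by
  have hπ := Real.pi_pos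
  have hn1 : (1:ℝ) ≤ (n:ℝ) := by exact_mod_cast hn
  have hnpos : (0:ℝ) < n := by linarith
  refine ⟨18 + 2*Real.pi*n, (7/8:ℝ)^n * 2^n, (9/8:ℝ)^n * (2 + Real.pi*n/4)^n, by positivity,
    by positivity, by positivity, ?_⟩
  intro ψ hψ
  set C : ℝ := 18 + 2*Real.pi*n with hC
  set t : ℝ := 1 / (4*n) with htdef
  have ht : 0 ≤ t := by positivity
  set z : Fin n → ℂ :=
    fun j => ((C:ℝ):ℂ) + Complex.log (1 / (1 - Complex.exp (-(ψ j * Complex.I)))) with hz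
  have hfacts : ∀ j, (z j).re = 2*Real.pi*n + 2 * hKernel (ψ j) ∧
      |(z j).im| ≤ Real.pi/2 ∧ 8 ≤ hKernel (ψ j) := by
    intro j
    obtain ⟨hu, hre, him, hk8⟩ := point_facts (ψ j) (hψ j).1 (hψ j).2
    refine ⟨?_, ?_, hk8⟩
    · rw [hz]
      simp only [Complex.add_re, Complex.ofReal_re, hre, hC]
      ring
    · rw [hz]
      simpa using him
  have h1 : ∀ j ∈ Finset.univ, 0 < (z j).re := by
    intro j _
    obtain ⟨hre, _, hk8⟩ := hfacts j
    rw [hre]; nlinarith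
  have h2 : ∀ j ∈ Finset.univ, |(z j).im| ≤ t * (z j).re := by
    intro j _
    obtain ⟨hre, him, hk8⟩ := hfacts j
    refine le_trans him ?_
    rw [hre, htdef]
    rw [div_mul_eq_mul_div, le_div_iff₀ (by positivity)]
    nlinarith
  have h3 : ((Finset.univ : Finset (Fin n)).card : ℝ) * (2 * t) ≤ 1 / 2 := by
    rw [Finset.card_univ, Fintype.card_fin, htdef]
    have hne : (4:ℝ) * n ≠ 0 := by positivity
    field_simp
    norm_num
  obtain ⟨L, U, Ib⟩ := aux_prod t ht Finset.univ z h1 h2 h3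
  rw [Finset.card_univ, Fintype.card_fin] at L U
  have hprod_pos : (0:ℝ) < ∏ j, hKernel (ψ j) := by
    apply Finset.prod_pos
    intro j _
    have := (hfacts j).2.2
    linarith
  have prodLB : (2:ℝ)^n * ∏ j, hKernel (ψ j) ≤ ∏ j, (z j).re := by
    calc (2:ℝ)^n * ∏ j, hKernel (ψ j) = ∏ j, (2 * hKernel (ψ j)) := by
          rw [Finset.prod_mul_distrib, Finset.prod_const, Finset.card_univ, Fintype.card_fin]
      _ ≤ ∏ j, (z j).re := by
          apply Finset.prod_le_prod
          · intro j _
            have := (hfacts j).2.2; linarith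
          · intro j _
            obtain ⟨hre, _, hk8⟩ := hfacts j
            rw [hre]; nlinarith
  have prodUB : ∏ j, (z j).re ≤ (2 + Real.pi*n/4)^n * ∏ j, hKernel (ψ j) := by
    calc ∏ j, (z j).re ≤ ∏ j, ((2 + Real.pi*n/4) * hKernel (ψ j)) := by
          apply Finset.prod_le_prod
          · intro j _
            exact (h1 j (Finset.mem_univ j)).le
          · intro j _
            obtain ⟨hre, _, hk8⟩ := hfacts j
            rw [hre]
            nlinarith [mul_le_mul_of_nonneg_left hk8 (by positivity : (0:ℝ) ≤ Real.pi*n/4)]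
      _ = (2 + Real.pi*n/4)^n * ∏ j, hKernel (ψ j) := by
          rw [Finset.prod_mul_distrib, Finset.prod_const, Finset.card_univ, Fintype.card_fin]
  have hgoal_eq : (∏ j, (((C:ℝ):ℂ) + Complex.log (1 / (1 - Complex.exp (-(ψ j * Complex.I)))))) =
      ∏ j, z j := rfl
  have p78 : (0:ℝ) ≤ (7/8:ℝ)^n := by positivity
  have p98 : (0:ℝ) ≤ (9/8:ℝ)^n := by positivity
  refine ⟨?_, ?_, ?_⟩
  · rw [hgoal_eq]
    calc (7/8:ℝ)^n * 2^n * ∏ j, hKernel (ψ j)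
        = (7/8:ℝ)^n * ((2:ℝ)^n * ∏ j, hKernel (ψ j)) := by ring
      _ ≤ (7/8:ℝ)^n * ∏ j, (z j).re := mul_le_mul_of_nonneg_left prodLB p78
      _ ≤ (∏ j, z j).re := L
  · rw [hgoal_eq]
    calc (∏ j, z j).re ≤ (9/8:ℝ)^n * ∏ j, (z j).re := U
      _ ≤ (9/8:ℝ)^n * ((2 + Real.pi*n/4)^n * ∏ j, hKernel (ψ j)) :=
          mul_le_mul_of_nonneg_left prodUB p98
      _ = (9/8:ℝ)^n * (2 + Real.pi*n/4)^n * ∏ j, hKernel (ψ j) := by ring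
  · rw [hgoal_eq]
    have : (0:ℝ) ≤ (7/8:ℝ)^n * ((2:ℝ)^n * ∏ j, hKernel (ψ j)) := by positivity
    calc (0:ℝ) ≤ (7/8:ℝ)^n * ((2:ℝ)^n * ∏ j, hKernel (ψ j)) := this
      _ ≤ (7/8:ℝ)^n * ∏ j, (z j).re := mul_le_mul_of_nonneg_left prodLB p78
      _ ≤ (∏ j, z j).re := L
end
end
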